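/- arXiv:1905.05304 — 3 statements merged into one kernel-verified Lean document; each statement's English description precedes it below -/
import Mathlib

section
/- Let 𝒢=(G,λ) be a temporal graph of lifetime T and let Δ ≤ T. Then (2Δ−1) · max_𝒮 Σ_{W∈𝒮} μ_Δ(𝒢|_W) ≥ Δ · μ_Δ(𝒢), where the maximum ranges over all Δ-templates 𝒮 with respect to lifetime T. In particular, there exists a Δ-template 𝒮 such that Σ_{W∈𝒮} μ_Δ(𝒢|_W) ≥ (Δ/(2Δ−1)) · μ_Δ(𝒢), and hence 𝒢 has a Δ-temporal matching of size at least (Δ/(2Δ−1)) · μ_Δ(𝒢) that is a union of Δ-temporal matchings of the windows of a single Δ-template. -/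
variable {V : Type*}

/-- The underlying (static) graph of a temporal graph given by its time-labeling. -/
def ugraph (lab : Sym2 V → Finset ℕ) : SimpleGraph V where
  Adj x y := x ≠ y ∧ (lab s(x, y)).Nonempty
  symm := by
    constructor
    intro x y h
    exact ⟨h.1.symm, by rw [Sym2.eq_swap]; exact h.2⟩
  loopless := by constructor; intro x h; exact h.1 rfl

/-- `(e, t)` is a time edge of the temporal graph given by `lab`. -/
def IsTimeEdge (lab : Sym2 V → Finset ℕ) (p : Sym2 V × ℕ) : Prop :=
  ¬ p.1.IsDiag ∧ p.2 ∈ lab p.1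

/-- Two time edges are Δ-independent: edges disjoint or labels at least Δ apart. -/
def DIndep (Δ : ℕ) (p q : Sym2 V × ℕ) : Prop :=
  (∀ v, v ∈ p.1 → v ∉ q.1) ∨ Δ ≤ ((p.2 : ℤ) - (q.2 : ℤ)).natAbs

/-- A Δ-temporal matching. -/
def IsTM (lab : Sym2 V → Finset ℕ) (Δ : ℕ) (M : Finset (Sym2 V × ℕ)) : Prop :=
  (∀ p ∈ M, IsTimeEdge lab p) ∧ ∀ p ∈ M, ∀ q ∈ M, p ≠ q → DIndep Δ p q

/-- μ_Δ: maximum cardinality of a Δ-temporal matching. -/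
noncomputable def tmu (lab : Sym2 V → Finset ℕ) (Δ : ℕ) : ℕ :=
  sSup {k | ∃ M : Finset (Sym2 V × ℕ), IsTM lab Δ M ∧ M.card = k}

/-- The temporal graph has lifetime `T`. -/
def HasLifetime (lab : Sym2 V → Finset ℕ) (T : ℕ) : Prop :=
  (∀ e, ∀ t ∈ lab e, 1 ≤ t ∧ t ≤ T) ∧ ∃ e : Sym2 V, ¬ e.IsDiag ∧ T ∈ lab e

/-- The snapshot at time `t`. -/
def tsnapshot (lab : Sym2 V → Finset ℕ) (t : ℕ) : SimpleGraph V where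
  Adj x y := x ≠ y ∧ t ∈ lab s(x, y)
  symm := by
    constructor
    intro x y h
    exact ⟨h.1.symm, by rw [Sym2.eq_swap]; exact h.2⟩
  loopless := by constructor; intro x h; exact h.1 rfl

/-- 𝒢|_S : keep only time edges with label in `S`. -/
def trestrict (lab : Sym2 V → Finset ℕ) (S : Finset ℕ) : Sym2 V → Finset ℕ :=
  fun e => lab e ∩ S

/-- A finite matching of a static graph. -/
def IsMatchingF (G : SimpleGraph V) (R : Finset (Sym2 V)) : Prop :=
  (∀ e ∈ R, e ∈ G.edgeSet) ∧ ∀ e ∈ R, ∀ e' ∈ R, e ≠ e' → ∀ v, v ∈ e → v ∉ e'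

/-- ν(G): maximum cardinality of a matching. -/
noncomputable def matchNum (G : SimpleGraph V) : ℕ :=
  sSup {k | ∃ R : Finset (Sym2 V), IsMatchingF G R ∧ R.card = k}

/-- An independent set of a static graph. -/
def IsIndepF (G : SimpleGraph V) (S : Finset V) : Prop :=
  ∀ u ∈ S, ∀ v ∈ S, ¬ G.Adj u v

/-- α(G): maximum cardinality of an independent set. -/
noncomputable def indepNum (G : SimpleGraph V) : ℕ :=
  sSup {k | ∃ S : Finset V, IsIndepF G S ∧ S.card = k}

/-- The Δ-temporal line graph: vertices are the time edges, two distinct time edges are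
adjacent iff the edges share a vertex and the labels are less than Δ apart. -/
def tline (lab : Sym2 V → Finset ℕ) (Δ : ℕ) :
    SimpleGraph {p : Sym2 V × ℕ // IsTimeEdge lab p} where
  Adj p q := p ≠ q ∧ (∃ v, v ∈ p.1.1 ∧ v ∈ q.1.1) ∧ ((p.1.2 : ℤ) - (q.1.2 : ℤ)).natAbs < Δ
  symm := by
    constructor
    rintro p q ⟨hne, ⟨v, hv1, hv2⟩, hlt⟩
    exact ⟨hne.symm, ⟨v, hv2, hv1⟩, by omega⟩
  loopless := by constructor; rintro p ⟨hne, -⟩; exact hne rfl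

/-- An interval `I = [I.1, I.2] ⊆ [T]` is a Δ-window (length exactly Δ) or a partial
Δ-window (length at most Δ-1, and starting at slot 1 or ending at slot T). -/
def IsWindow (Δ T : ℕ) (I : ℕ × ℕ) : Prop :=
  1 ≤ I.1 ∧ I.1 ≤ I.2 ∧ I.2 ≤ T ∧
  (I.2 + 1 = I.1 + Δ ∨ (I.2 + 1 < I.1 + Δ ∧ (I.1 = 1 ∨ I.2 = T)))

/-- A family of pairwise disjoint Δ-windows or partial Δ-windows in `[T]` such that
any two consecutive members are at distance exactly `Δ - 1` from each other
(the distance between `[a₁,b₁]` and `[a₂,b₂]` with `b₁ < a₂` being `a₂ - b₁ - 1`). -/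
def GoodFamily (Δ T : ℕ) (S : Finset (ℕ × ℕ)) : Prop :=
  (∀ I ∈ S, IsWindow Δ T I) ∧
  (∀ I ∈ S, ∀ J ∈ S, I ≠ J → (I.2 < J.1 ∨ J.2 < I.1)) ∧
  (∀ I ∈ S, ∀ J ∈ S, I.2 < J.1 → (∀ K ∈ S, ¬(I.2 < K.1 ∧ K.2 < J.1)) → J.1 = I.2 + Δ)

/-- A Δ-template with respect to lifetime `T`: a maximal such family. -/
def IsTemplate (Δ T : ℕ) (S : Finset (ℕ × ℕ)) : Prop :=
  GoodFamily Δ T S ∧ ∀ S' : Finset (ℕ × ℕ), S ⊆ S' → GoodFamily Δ T S' → S' = S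

def tmpl (Δ T r : ℕ) : Finset (ℕ × ℕ) :=
  (((Finset.range (T+1)).filter (fun j => r + 1 + j*(2*Δ-1) ≤ T)).image
    (fun j => (r+1+j*(2*Δ-1), min (r+Δ+j*(2*Δ-1)) T)))
  ∪ (if Δ ≤ r then {(1, r+1-Δ)} else ∅)

lemma mem_tmpl {Δ T r : ℕ} (hΔ : 1 ≤ Δ) {I : ℕ × ℕ} :
    I ∈ tmpl Δ T r ↔ ((Δ ≤ r ∧ I = (1, r+1-Δ)) ∨
      ∃ j, r+1+j*(2*Δ-1) ≤ T ∧ I = (r+1+j*(2*Δ-1), min (r+Δ+j*(2*Δ-1)) T)) := by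
  unfold tmpl
  rw [Finset.mem_union, Finset.mem_image]
  constructor
  · rintro (⟨j, hj, rfl⟩ | h)
    · rw [Finset.mem_filter] at hj
      exact Or.inr ⟨j, hj.2, rfl⟩
    · left
      split_ifs at h with hr
      · simp at h; exact ⟨hr, h⟩
      · simp at h
  · rintro (⟨hr, rfl⟩ | ⟨j, hj, rfl⟩)
    · right; rw [if_pos hr]; simp
    · left
      refine ⟨j, Finset.mem_filter.2 ⟨Finset.mem_range.2 ?_, hj⟩, rfl⟩
      have : j ≤ j * (2*Δ-1) := Nat.le_mul_of_pos_right j (by omega)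
      omega

lemma tmpl_window {Δ T r : ℕ} (hΔ : 1 ≤ Δ) (hΔT : Δ ≤ T) (hr : r < 2*Δ-1) :
    ∀ I ∈ tmpl Δ T r, IsWindow Δ T I := by
  intro I hI
  rcases (mem_tmpl hΔ).1 hI with ⟨hr', rfl⟩ | ⟨j, hj, rfl⟩
  · refine ⟨le_refl 1, by omega, by omega, Or.inr ⟨by omega, Or.inl rfl⟩⟩
  · refine ⟨by omega, by omega, by omega, ?_⟩
    rcases le_or_gt (r+Δ+j*(2*Δ-1)) T with h | h
    · exact Or.inl (by rw [min_eq_left h]; omega)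
    · exact Or.inr ⟨by rw [min_eq_right (le_of_lt h)]; omega,
        Or.inr (by rw [min_eq_right (le_of_lt h)])⟩

lemma tmpl_order {Δ T r : ℕ} (hΔ : 1 ≤ Δ) :
    ∀ I ∈ tmpl Δ T r, ∀ J ∈ tmpl Δ T r, I.1 < J.1 → I.2 + Δ ≤ J.1 := by
  intro I hI J hJ hlt
  rcases (mem_tmpl hΔ).1 hI with ⟨hr', rfl⟩ | ⟨j, hj, rfl⟩ <;>
    rcases (mem_tmpl hΔ).1 hJ with ⟨hr'', rfl⟩ | ⟨j', hj', rfl⟩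
  · simp at hlt
  · simp only at hlt ⊢
    omega
  · simp only at hlt ⊢
    omega
  · simp only at hlt ⊢
    have hjj : j < j' := by
      by_contra h
      have : j' * (2*Δ-1) ≤ j * (2*Δ-1) := Nat.mul_le_mul_right _ (by omega)
      omega
    have : (j+1) * (2*Δ-1) ≤ j' * (2*Δ-1) := Nat.mul_le_mul_right _ (by omega)
    have h1 : j * (2*Δ-1) + (2*Δ-1) ≤ j' * (2*Δ-1) := by
      rw [add_mul, one_mul] at this; omega
    omega

lemma tmpl_eq_of_fst {Δ T r : ℕ} (hΔ : 1 ≤ Δ) :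
    ∀ I ∈ tmpl Δ T r, ∀ J ∈ tmpl Δ T r, I.1 = J.1 → I = J := by
  intro I hI J hJ heq
  rcases (mem_tmpl hΔ).1 hI with ⟨hr', rfl⟩ | ⟨j, hj, rfl⟩ <;>
    rcases (mem_tmpl hΔ).1 hJ with ⟨hr'', rfl⟩ | ⟨j', hj', rfl⟩
  · rfl
  · simp only at heq; omega
  · simp only at heq; omega
  · simp only at heq ⊢
    have : j = j' := by
      rcases Nat.lt_trichotomy j j' with h | h | h
      · have : (j+1) * (2*Δ-1) ≤ j' * (2*Δ-1) := Nat.mul_le_mul_right _ (by omega)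
        rw [add_mul, one_mul] at this; omega
      · exact h
      · have : (j'+1) * (2*Δ-1) ≤ j * (2*Δ-1) := Nat.mul_le_mul_right _ (by omega)
        rw [add_mul, one_mul] at this; omega
    subst this; rfl

lemma tmpl_sep {Δ T r : ℕ} (hΔ : 1 ≤ Δ) :
    ∀ I ∈ tmpl Δ T r, ∀ J ∈ tmpl Δ T r, I ≠ J → I.2 + Δ ≤ J.1 ∨ J.2 + Δ ≤ I.1 := by
  intro I hI J hJ hne
  rcases Nat.lt_trichotomy I.1 J.1 with h | h | h
  · exact Or.inl (tmpl_order hΔ I hI J hJ h)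
  · exact absurd (tmpl_eq_of_fst hΔ I hI J hJ h) hne
  · exact Or.inr (tmpl_order hΔ J hJ I hI h)

lemma tmpl_next {Δ T r : ℕ} (hΔ : 1 ≤ Δ) :
    ∀ I ∈ tmpl Δ T r, I.2 + Δ ≤ T → ∃ J ∈ tmpl Δ T r, J.1 = I.2 + Δ := by
  intro I hI hle
  rcases (mem_tmpl hΔ).1 hI with ⟨hr', rfl⟩ | ⟨j, hj, rfl⟩
  · refine ⟨(r+1+0*(2*Δ-1), min (r+Δ+0*(2*Δ-1)) T), (mem_tmpl hΔ).2 (Or.inr ⟨0, ?_, rfl⟩), ?_⟩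
    · simp only at hle ⊢; omega
    · simp only at hle ⊢; omega
  · simp only at hle
    have hmin : min (r+Δ+j*(2*Δ-1)) T = r+Δ+j*(2*Δ-1) := by omega
    refine ⟨(r+1+(j+1)*(2*Δ-1), min (r+Δ+(j+1)*(2*Δ-1)) T),
      (mem_tmpl hΔ).2 (Or.inr ⟨j+1, ?_, rfl⟩), ?_⟩
    · rw [add_mul, one_mul]; omega
    · simp only [hmin]
      rw [add_mul, one_mul]; omega

lemma tmpl_good {Δ T r : ℕ} (hΔ : 1 ≤ Δ) (hΔT : Δ ≤ T) (hr : r < 2*Δ-1) :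
    GoodFamily Δ T (tmpl Δ T r) := by
  refine ⟨tmpl_window hΔ hΔT hr, ?_, ?_⟩
  · intro I hI J hJ hne
    rcases tmpl_sep hΔ I hI J hJ hne with h | h
    · exact Or.inl (by omega)
    · exact Or.inr (by omega)
  · intro I hI J hJ hlt hbetw
    have hIJ : I.1 < J.1 := by
      have := (tmpl_window hΔ hΔT hr I hI).2.1
      omega
    have hord := tmpl_order hΔ I hI J hJ hIJ
    have hJT := (tmpl_window hΔ hΔT hr J hJ).2.2.1
    have hJ12 := (tmpl_window hΔ hΔT hr J hJ).2.1
    obtain ⟨K, hK, hK1⟩ := tmpl_next hΔ I hI (by omega)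
    rcases eq_or_ne K J with rfl | hne
    · exact hK1
    · exfalso
      have hKJ : K.1 < J.1 ∨ K.1 = J.1 ∨ J.1 < K.1 := Nat.lt_trichotomy _ _
      rcases hKJ with h | h | h
      · have := tmpl_order hΔ K hK J hJ h
        exact hbetw K hK ⟨by omega, by omega⟩
      · exact hne (tmpl_eq_of_fst hΔ K hK J hJ h)
      · omega

lemma tmpl_maximal {Δ T r : ℕ} (hΔ : 1 ≤ Δ) (hΔT : Δ ≤ T) (hr : r < 2*Δ-1) :
    ∀ S' : Finset (ℕ × ℕ), tmpl Δ T r ⊆ S' → GoodFamily Δ T S' → S' = tmpl Δ T r := by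
  intro S' hsub hgood
  by_contra hne
  have hD : (S' \ tmpl Δ T r).Nonempty := by
    rw [Finset.sdiff_nonempty]
    intro h
    exact hne (Finset.Subset.antisymm h hsub)
  obtain ⟨K, hKD, hKmin⟩ := Finset.exists_min_image _ Prod.fst hD
  rw [Finset.mem_sdiff] at hKD
  obtain ⟨hKS, hKnot⟩ := hKD
  have hKwin := hgood.1 K hKS
  obtain ⟨hK1, hK12, hK2T, hKalt⟩ := hKwin
  -- window0 : first full window
  have hw0mem : r < Δ → (r+1+0*(2*Δ-1), min (r+Δ+0*(2*Δ-1)) T) ∈ tmpl Δ T r :=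
    fun h => (mem_tmpl hΔ).2 (Or.inr ⟨0, by omega, rfl⟩)
  by_cases hcaseA : r < Δ ∧ K.2 ≤ r
  · -- left gap case
    obtain ⟨hrΔ, hK2r⟩ := hcaseA
    have hK1eq : K.1 = 1 := by
      rcases hKalt with h | ⟨h1, h2 | h2⟩
      · omega
      · exact h2
      · omega
    have hbetw : ∀ L ∈ S', ¬(K.2 < L.1 ∧ L.2 < (r+1+0*(2*Δ-1), min (r+Δ+0*(2*Δ-1)) T).1) := by
      intro L hL ⟨h1, h2⟩
      simp only at h2
      obtain ⟨hL1, hL12, hL2T, hLalt⟩ := hgood.1 L hL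
      rcases hLalt with h | ⟨h3, h4 | h4⟩ <;> omega
    have hw0 := hw0mem hrΔ
    have := hgood.2.2 K hKS _ (hsub (hw0mem hrΔ)) (by simp only; omega) hbetw
    simp only at this
    omega
  · -- general case: find template window I with I.2 < K.1, maximal I.2
    push_neg at hcaseA
    have hIex : ∃ I ∈ tmpl Δ T r, I.2 < K.1 := by
      by_cases hrΔ : Δ ≤ r
      · have hpmem : ((1:ℕ), r+1-Δ) ∈ tmpl Δ T r := (mem_tmpl hΔ).2 (Or.inl ⟨hrΔ, rfl⟩)
        have hKne : K ≠ (1, r+1-Δ) := fun h => hKnot (h ▸ hpmem)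
        rcases hgood.2.1 K hKS _ (hsub hpmem) hKne with h | h
        · simp only at h; omega
        · exact ⟨_, hpmem, h⟩
      · have hK2r := hcaseA (by omega)
        have hw0 := hw0mem (by omega)
        have hKne : K ≠ (r+1+0*(2*Δ-1), min (r+Δ+0*(2*Δ-1)) T) := fun h => hKnot (h ▸ hw0)
        rcases hgood.2.1 K hKS _ (hsub hw0) hKne with h | h
        · simp only at h; omega
        · exact ⟨_, hw0, h⟩
    obtain ⟨I0, hI0mem, hI0lt⟩ := hIex
    have hFne : ((tmpl Δ T r).filter (fun I => I.2 < K.1)).Nonempty :=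
      ⟨I0, Finset.mem_filter.2 ⟨hI0mem, hI0lt⟩⟩
    obtain ⟨I, hIF, hImax⟩ := Finset.exists_max_image _ Prod.snd hFne
    rw [Finset.mem_filter] at hIF
    obtain ⟨hImem, hIlt⟩ := hIF
    -- K.1 < I.2 + Δ
    have hKlt : K.1 < I.2 + Δ := by
      by_contra h
      push_neg at h
      obtain ⟨J, hJmem, hJ1⟩ := tmpl_next hΔ I hImem (by omega)
      have hKneJ : K ≠ J := fun heq => hKnot (heq ▸ hJmem)
      rcases hgood.2.1 K hKS J (hsub hJmem) hKneJ with h2 | h2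
      · omega
      · have := hImax J (Finset.mem_filter.2 ⟨hJmem, by omega⟩)
        obtain ⟨hJa, hJb, hJc, -⟩ := tmpl_window hΔ hΔT hr J hJmem
        omega
    -- nothing between I and K
    have hbetw : ∀ L ∈ S', ¬(I.2 < L.1 ∧ L.2 < K.1) := by
      intro L hL ⟨h1, h2⟩
      by_cases hLt : L ∈ tmpl Δ T r
      · have := hImax L (Finset.mem_filter.2 ⟨hLt, h2⟩)
        obtain ⟨hLa, hLb, hLc, -⟩ := tmpl_window hΔ hΔT hr L hLt
        omega
      · have := hKmin L (Finset.mem_sdiff.2 ⟨hL, hLt⟩)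
        obtain ⟨hLa, hLb, hLc, -⟩ := hgood.1 L hL
        omega
    have := hgood.2.2 I (hsub hImem) K hKS hIlt hbetw
    omega

lemma tmpl_isTemplate {Δ T r : ℕ} (hΔ : 1 ≤ Δ) (hΔT : Δ ≤ T) (hr : r < 2*Δ-1) :
    IsTemplate Δ T (tmpl Δ T r) :=
  ⟨tmpl_good hΔ hΔT hr, tmpl_maximal hΔ hΔT hr⟩

/-- offset covering time `t` at depth `s` -/
def covOff (Δ t s : ℕ) : ℕ := if s < t then (t - s - 1) % (2*Δ-1) else t + 2*Δ - 2 - s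

lemma covOff_lt {Δ t s : ℕ} (hΔ : 1 ≤ Δ) (ht : 1 ≤ t) (hs : s < Δ) :
    covOff Δ t s < 2*Δ-1 := by
  unfold covOff
  split_ifs with h
  · exact Nat.mod_lt _ (by omega)
  · omega

lemma covOff_covers {Δ T t s : ℕ} (hΔ : 1 ≤ Δ) (ht : 1 ≤ t) (htT : t ≤ T) (hs : s < Δ) :
    ∃ I ∈ tmpl Δ T (covOff Δ t s), I.1 ≤ t ∧ t ≤ I.2 := by
  unfold covOff
  split_ifs with h
  · -- full window with start t - s
    set r := (t - s - 1) % (2*Δ-1) with hrdef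
    set j := (t - s - 1) / (2*Δ-1) with hjdef
    have hmd : r + (2*Δ-1) * j = t - s - 1 := Nat.mod_add_div _ _
    rw [Nat.mul_comm] at hmd
    refine ⟨(r+1+j*(2*Δ-1), min (r+Δ+j*(2*Δ-1)) T),
      (mem_tmpl hΔ).2 (Or.inr ⟨j, by omega, rfl⟩), by simp only; omega, by simp only; omega⟩
  · -- partial window
    refine ⟨(1, (t + 2*Δ - 2 - s) + 1 - Δ),
      (mem_tmpl hΔ).2 (Or.inl ⟨by omega, rfl⟩), by simp only; omega, by simp only; omega⟩

lemma covOff_mod {Δ t s : ℕ} (hΔ : 1 ≤ Δ) (ht : 1 ≤ t) (hs : s < Δ) :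
    (covOff Δ t s + s) % (2*Δ-1) = (t - 1) % (2*Δ-1) := by
  unfold covOff
  split_ifs with h
  · conv_rhs => rw [show t - 1 = (t - s - 1) + s by omega]
    rw [Nat.add_mod, Nat.mod_mod_of_dvd _ dvd_rfl, ← Nat.add_mod]
  · have : t + 2*Δ - 2 - s + s = (t-1) + (2*Δ-1) := by omega
    rw [this, Nat.add_mod_right]

lemma covOff_inj {Δ t : ℕ} (hΔ : 1 ≤ Δ) (ht : 1 ≤ t) :
    ∀ s < Δ, ∀ s' < Δ, covOff Δ t s = covOff Δ t s' → s = s' := by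
  intro s hs s' hs' heq
  have h1 := covOff_mod (t := t) hΔ ht hs
  have h2 := covOff_mod (t := t) hΔ ht hs'
  rw [heq] at h1
  rw [← h2] at h1
  have hP : 0 < 2*Δ-1 := by omega
  have := Nat.ModEq.add_left_cancel' (covOff Δ t s') (Nat.ModEq.symm h1)
  have hss : s' % (2*Δ-1) = s % (2*Δ-1) := this
  rw [Nat.mod_eq_of_lt (by omega), Nat.mod_eq_of_lt (by omega)] at hss
  exact hss.symm

lemma cover_count {Δ T t : ℕ} (hΔ : 1 ≤ Δ) (ht : 1 ≤ t) (htT : t ≤ T) :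
    Δ ≤ ((Finset.range (2*Δ-1)).filter
      (fun r => ∃ I ∈ tmpl Δ T r, I.1 ≤ t ∧ t ≤ I.2)).card := by
  have : (Finset.range Δ).card ≤ ((Finset.range (2*Δ-1)).filter
      (fun r => ∃ I ∈ tmpl Δ T r, I.1 ≤ t ∧ t ≤ I.2)).card := by
    apply Finset.card_le_card_of_injOn (covOff Δ t)
    · intro s hs
      rw [Finset.mem_coe, Finset.mem_range] at hs
      rw [Finset.mem_coe, Finset.mem_filter, Finset.mem_range]
      exact ⟨covOff_lt hΔ ht hs, covOff_covers hΔ ht htT hs⟩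
    · intro s hs s' hs' heq
      rw [Finset.mem_coe, Finset.mem_range] at hs hs'
      exact covOff_inj hΔ ht s hs s' hs' heq
  rwa [Finset.card_range] at this

-- matching lemmas
lemma isTM_empty (lab : Sym2 V → Finset ℕ) (Δ : ℕ) : IsTM lab Δ (∅ : Finset (Sym2 V × ℕ)) :=
  ⟨fun p hp => absurd hp (Finset.notMem_empty p), fun p hp => absurd hp (Finset.notMem_empty p)⟩

lemma isTM_subset {lab : Sym2 V → Finset ℕ} {Δ : ℕ} {M M' : Finset (Sym2 V × ℕ)}
    (h : IsTM lab Δ M) (hsub : M' ⊆ M) : IsTM lab Δ M' :=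
  ⟨fun p hp => h.1 p (hsub hp), fun p hp q hq => h.2 p (hsub hp) q (hsub hq)⟩

lemma isTM_filter [DecidableEq V] {lab : Sym2 V → Finset ℕ} {Δ : ℕ} {M : Finset (Sym2 V × ℕ)}
    (h : IsTM lab Δ M) (S : Finset ℕ) :
    IsTM (trestrict lab S) Δ (M.filter (fun p => p.2 ∈ S)) := by
  refine ⟨fun p hp => ?_, fun p hp q hq => h.2 p (Finset.mem_filter.1 hp).1 q (Finset.mem_filter.1 hq).1⟩
  rw [Finset.mem_filter] at hp
  exact ⟨(h.1 p hp.1).1, Finset.mem_inter.2 ⟨(h.1 p hp.1).2, hp.2⟩⟩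

lemma isTM_of_trestrict [DecidableEq V] {lab : Sym2 V → Finset ℕ} {Δ : ℕ} {S : Finset ℕ}
    {M : Finset (Sym2 V × ℕ)} (h : IsTM (trestrict lab S) Δ M) : IsTM lab Δ M :=
  ⟨fun p hp => ⟨(h.1 p hp).1, (Finset.mem_inter.1 (h.1 p hp).2).1⟩, h.2⟩

lemma tm_card_le [Fintype V] [DecidableEq V] {lab' : Sym2 V → Finset ℕ} {Δ T : ℕ}
    {M : Finset (Sym2 V × ℕ)} (h : IsTM lab' Δ M) (hb : ∀ e, ∀ t ∈ lab' e, t ≤ T) :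
    M.card ≤ Fintype.card (Sym2 V) * (T+1) := by
  have hsub : M ⊆ Finset.univ ×ˢ Finset.range (T+1) := by
    intro p hp
    rw [Finset.mem_product, Finset.mem_range]
    exact ⟨Finset.mem_univ _, Nat.lt_succ_of_le (hb p.1 p.2 (h.1 p hp).2)⟩
  calc M.card ≤ (Finset.univ ×ˢ Finset.range (T+1)).card := Finset.card_le_card hsub
    _ = Fintype.card (Sym2 V) * (T+1) := by
        rw [Finset.card_product, Finset.card_range, Finset.card_univ]

lemma tmu_bddAbove [Fintype V] [DecidableEq V] {lab' : Sym2 V → Finset ℕ} {Δ T : ℕ}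
    (hb : ∀ e, ∀ t ∈ lab' e, t ≤ T) :
    BddAbove {k | ∃ M : Finset (Sym2 V × ℕ), IsTM lab' Δ M ∧ M.card = k} := by
  refine ⟨Fintype.card (Sym2 V) * (T+1), fun k hk => ?_⟩
  obtain ⟨M, hM, rfl⟩ := hk
  exact tm_card_le hM hb

lemma tmu_spec [Fintype V] [DecidableEq V] {lab' : Sym2 V → Finset ℕ} {Δ T : ℕ}
    (hb : ∀ e, ∀ t ∈ lab' e, t ≤ T) :
    ∃ M : Finset (Sym2 V × ℕ), IsTM lab' Δ M ∧ M.card = tmu lab' Δ := by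
  have hne : {k | ∃ M : Finset (Sym2 V × ℕ), IsTM lab' Δ M ∧ M.card = k}.Nonempty :=
    ⟨0, ∅, isTM_empty _ _, rfl⟩
  exact Nat.sSup_mem hne (tmu_bddAbove (T := T) hb)

lemma le_tmu [Fintype V] [DecidableEq V] {lab' : Sym2 V → Finset ℕ} {Δ T : ℕ}
    {M : Finset (Sym2 V × ℕ)} (h : IsTM lab' Δ M) (hb : ∀ e, ∀ t ∈ lab' e, t ≤ T) :
    M.card ≤ tmu lab' Δ :=
  le_csSup (tmu_bddAbove (T := T) hb) ⟨M, h, rfl⟩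

lemma tmu_le [Fintype V] [DecidableEq V] {lab' : Sym2 V → Finset ℕ} {Δ T : ℕ}
    (hb : ∀ e, ∀ t ∈ lab' e, t ≤ T) :
    tmu lab' Δ ≤ Fintype.card (Sym2 V) * (T+1) :=
  csSup_le ⟨0, ∅, isTM_empty _ _, rfl⟩ (fun k ⟨M, hM, hkc⟩ => hkc ▸ tm_card_le hM hb)


/-- `(2Δ-1) · max_𝒮 ∑_{W ∈ 𝒮} μ_Δ(𝒢|_W) ≥ Δ · μ_Δ(𝒢)` over all
Δ-templates 𝒮; in particular some Δ-template 𝒮 satisfies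
`∑_{W ∈ 𝒮} μ_Δ(𝒢|_W) ≥ (Δ/(2Δ-1)) · μ_Δ(𝒢)`, and hence 𝒢 has a Δ-temporal
matching of size at least `(Δ/(2Δ-1)) · μ_Δ(𝒢)` that is a union of Δ-temporal
matchings of the windows of a single Δ-template. -/
theorem stmt13 {V : Type*} [Fintype V] [DecidableEq V]
    (lab : Sym2 V → Finset ℕ) (T Δ : ℕ) (hT : HasLifetime lab T)
    (hΔ : 1 ≤ Δ) (hΔT : Δ ≤ T) :
    Δ * tmu lab Δ ≤ (2 * Δ - 1) *
      sSup {k | ∃ S : Finset (ℕ × ℕ), IsTemplate Δ T S ∧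
        k = ∑ I ∈ S, tmu (trestrict lab (Finset.Icc I.1 I.2)) Δ} ∧
    (∃ S : Finset (ℕ × ℕ), IsTemplate Δ T S ∧
      Δ * tmu lab Δ ≤ (2 * Δ - 1) * ∑ I ∈ S, tmu (trestrict lab (Finset.Icc I.1 I.2)) Δ) ∧
    (∃ S : Finset (ℕ × ℕ), IsTemplate Δ T S ∧
      ∃ MW : ℕ × ℕ → Finset (Sym2 V × ℕ),
        (∀ I ∈ S, IsTM (trestrict lab (Finset.Icc I.1 I.2)) Δ (MW I)) ∧
        IsTM lab Δ (S.biUnion MW) ∧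
        Δ * tmu lab Δ ≤ (2 * Δ - 1) * (S.biUnion MW).card) := by
  classical
  have hlabT : ∀ e, ∀ t ∈ lab e, t ≤ T := fun e t ht => (hT.1 e t ht).2
  have hresT : ∀ (a b : ℕ), ∀ e, ∀ t ∈ trestrict lab (Finset.Icc a b) e, t ≤ T :=
    fun a b e t ht => hlabT e t (Finset.mem_inter.1 ht).1
  obtain ⟨M, hM, hMcard⟩ := tmu_spec (Δ := Δ) hlabT
  set g : ℕ → ℕ := fun r => ∑ I ∈ tmpl Δ T r, tmu (trestrict lab (Finset.Icc I.1 I.2)) Δ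
    with hg
  -- key counting inequality
  have key : Δ * M.card ≤ ∑ r ∈ Finset.range (2*Δ-1), g r := by
    have step1 : ∀ r ∈ Finset.range (2*Δ-1),
        ∑ I ∈ tmpl Δ T r, (M.filter (fun p => p.2 ∈ Finset.Icc I.1 I.2)).card ≤ g r := by
      intro r _
      apply Finset.sum_le_sum
      intro I _
      exact le_tmu (isTM_filter hM _) (hresT I.1 I.2)
    have step2 : Δ * M.card ≤ ∑ r ∈ Finset.range (2*Δ-1),
        ∑ I ∈ tmpl Δ T r, (M.filter (fun p => p.2 ∈ Finset.Icc I.1 I.2)).card := by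
      have hrw : ∀ (r : ℕ), ∀ I ∈ tmpl Δ T r,
          ∑ p ∈ M, (if p.2 ∈ Finset.Icc I.1 I.2 then 1 else 0)
            = (M.filter (fun p => p.2 ∈ Finset.Icc I.1 I.2)).card := by
        intro r I _
        rw [Finset.card_filter]
      calc Δ * M.card = ∑ _p ∈ M, Δ := by rw [Finset.sum_const, smul_eq_mul, mul_comm]
        _ ≤ ∑ p ∈ M, ∑ r ∈ Finset.range (2*Δ-1), ∑ I ∈ tmpl Δ T r,
              (if p.2 ∈ Finset.Icc I.1 I.2 then 1 else 0) := by
            apply Finset.sum_le_sum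
            intro p hp
            obtain ⟨hp1, hp2⟩ := hT.1 p.1 p.2 (hM.1 p hp).2
            calc Δ ≤ ((Finset.range (2*Δ-1)).filter
                  (fun r => ∃ I ∈ tmpl Δ T r, I.1 ≤ p.2 ∧ p.2 ≤ I.2)).card :=
                cover_count hΔ hp1 hp2
              _ = ∑ r ∈ (Finset.range (2*Δ-1)).filter
                  (fun r => ∃ I ∈ tmpl Δ T r, I.1 ≤ p.2 ∧ p.2 ≤ I.2), 1 :=
                Finset.card_eq_sum_ones _
              _ ≤ ∑ r ∈ (Finset.range (2*Δ-1)).filter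
                  (fun r => ∃ I ∈ tmpl Δ T r, I.1 ≤ p.2 ∧ p.2 ≤ I.2),
                  ∑ I ∈ tmpl Δ T r, (if p.2 ∈ Finset.Icc I.1 I.2 then 1 else 0) := by
                apply Finset.sum_le_sum
                intro r hr
                obtain ⟨-, I0, hI0mem, hI01, hI02⟩ := Finset.mem_filter.1 hr
                calc (1:ℕ) = (if p.2 ∈ Finset.Icc I0.1 I0.2 then 1 else 0) := by
                      rw [if_pos (Finset.mem_Icc.2 ⟨hI01, hI02⟩)]
                  _ ≤ ∑ I ∈ tmpl Δ T r, (if p.2 ∈ Finset.Icc I.1 I.2 then 1 else 0) :=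
                      Finset.single_le_sum (f := fun I : ℕ × ℕ => if p.2 ∈ Finset.Icc I.1 I.2 then (1:ℕ) else 0) (fun I _ => Nat.zero_le _) hI0mem
              _ ≤ ∑ r ∈ Finset.range (2*Δ-1),
                  ∑ I ∈ tmpl Δ T r, (if p.2 ∈ Finset.Icc I.1 I.2 then 1 else 0) :=
                Finset.sum_le_sum_of_subset (Finset.filter_subset _ _)
        _ = ∑ r ∈ Finset.range (2*Δ-1), ∑ p ∈ M, ∑ I ∈ tmpl Δ T r,
              (if p.2 ∈ Finset.Icc I.1 I.2 then 1 else 0) := Finset.sum_comm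
        _ = ∑ r ∈ Finset.range (2*Δ-1), ∑ I ∈ tmpl Δ T r, ∑ p ∈ M,
              (if p.2 ∈ Finset.Icc I.1 I.2 then 1 else 0) :=
            Finset.sum_congr rfl (fun r _ => Finset.sum_comm)
        _ = ∑ r ∈ Finset.range (2*Δ-1),
              ∑ I ∈ tmpl Δ T r, (M.filter (fun p => p.2 ∈ Finset.Icc I.1 I.2)).card :=
            Finset.sum_congr rfl (fun r hr => Finset.sum_congr rfl (hrw r))
    exact step2.trans (Finset.sum_le_sum step1)
  -- maximizing offset
  obtain ⟨r₀, hr₀mem, hr₀max⟩ := Finset.exists_max_image (Finset.range (2*Δ-1)) g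
    ⟨0, Finset.mem_range.2 (by omega)⟩
  have hr₀lt : r₀ < 2*Δ-1 := Finset.mem_range.1 hr₀mem
  have hsum_le : ∑ r ∈ Finset.range (2*Δ-1), g r ≤ (2*Δ-1) * g r₀ := by
    calc ∑ r ∈ Finset.range (2*Δ-1), g r ≤ ∑ _r ∈ Finset.range (2*Δ-1), g r₀ :=
        Finset.sum_le_sum (fun i hi => hr₀max i hi)
      _ = (2*Δ-1) * g r₀ := by rw [Finset.sum_const, Finset.card_range, smul_eq_mul]
  have hmain : Δ * tmu lab Δ ≤ (2*Δ-1) * g r₀ := by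
    rw [← hMcard]; exact key.trans hsum_le
  have htempl : IsTemplate Δ T (tmpl Δ T r₀) := tmpl_isTemplate hΔ hΔT hr₀lt
  refine ⟨?_, ⟨tmpl Δ T r₀, htempl, hmain⟩, ?_⟩
  · -- first conjunct via le_csSup
    have hbdd : BddAbove {k | ∃ S : Finset (ℕ × ℕ), IsTemplate Δ T S ∧
        k = ∑ I ∈ S, tmu (trestrict lab (Finset.Icc I.1 I.2)) Δ} := by
      refine ⟨T * (Fintype.card (Sym2 V) * (T+1)), fun k hk => ?_⟩
      obtain ⟨S, hS, rfl⟩ := hk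
      have hcard : S.card ≤ T := by
        have : S.card ≤ (Finset.Icc 1 T).card := by
          apply Finset.card_le_card_of_injOn Prod.fst
          · intro I hI
            obtain ⟨h1, h2, h3, -⟩ := hS.1.1 I hI
            exact Finset.mem_Icc.2 ⟨h1, le_trans h2 h3⟩
          · intro I hI J hJ heq
            by_contra hne
            obtain ⟨h1, h2, h3, -⟩ := hS.1.1 I (Finset.mem_coe.1 hI)
            obtain ⟨h1', h2', h3', -⟩ := hS.1.1 J (Finset.mem_coe.1 hJ)
            rcases hS.1.2.1 I (Finset.mem_coe.1 hI) J (Finset.mem_coe.1 hJ) hne with h | h <;>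
              omega
        rwa [Nat.card_Icc, Nat.add_sub_cancel] at this
      calc ∑ I ∈ S, tmu (trestrict lab (Finset.Icc I.1 I.2)) Δ
          ≤ ∑ _I ∈ S, Fintype.card (Sym2 V) * (T+1) :=
            Finset.sum_le_sum (fun I _ => tmu_le (hresT I.1 I.2))
        _ = S.card * (Fintype.card (Sym2 V) * (T+1)) := by
            rw [Finset.sum_const, smul_eq_mul]
        _ ≤ T * (Fintype.card (Sym2 V) * (T+1)) := Nat.mul_le_mul_right _ hcard
    have hmem : g r₀ ∈ {k | ∃ S : Finset (ℕ × ℕ), IsTemplate Δ T S ∧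
        k = ∑ I ∈ S, tmu (trestrict lab (Finset.Icc I.1 I.2)) Δ} := ⟨tmpl Δ T r₀, htempl, rfl⟩
    exact hmain.trans (Nat.mul_le_mul_left _ (le_csSup hbdd hmem))
  · -- third conjunct
    have hch : ∀ I : ℕ × ℕ, ∃ N : Finset (Sym2 V × ℕ),
        IsTM (trestrict lab (Finset.Icc I.1 I.2)) Δ N ∧
        N.card = tmu (trestrict lab (Finset.Icc I.1 I.2)) Δ :=
      fun I => tmu_spec (hresT I.1 I.2)
    choose N hN1 hN2 using hch
    have hlabel : ∀ I, ∀ p ∈ N I, I.1 ≤ p.2 ∧ p.2 ≤ I.2 := fun I p hp =>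
      Finset.mem_Icc.1 (Finset.mem_inter.1 ((hN1 I).1 p hp).2).2
    refine ⟨tmpl Δ T r₀, htempl, N, fun I _ => hN1 I, ⟨?_, ?_⟩, ?_⟩
    · intro p hp
      obtain ⟨I, hImem, hpI⟩ := Finset.mem_biUnion.1 hp
      exact (isTM_of_trestrict (hN1 I)).1 p hpI
    · intro p hp q hq hpq
      obtain ⟨I, hImem, hpI⟩ := Finset.mem_biUnion.1 hp
      obtain ⟨J, hJmem, hqJ⟩ := Finset.mem_biUnion.1 hq
      rcases eq_or_ne I J with rfl | hIJ
      · exact (hN1 I).2 p hpI q hqJ hpq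
      · obtain ⟨hpa, hpb⟩ := hlabel I p hpI
        obtain ⟨hqa, hqb⟩ := hlabel J q hqJ
        rcases tmpl_sep hΔ I hImem J hJmem hIJ with h | h
        · exact Or.inr (by omega)
        · exact Or.inr (by omega)
    · have hdisj : ∀ I ∈ tmpl Δ T r₀, ∀ J ∈ tmpl Δ T r₀, I ≠ J → Disjoint (N I) (N J) := by
        intro I hI J hJ hIJ
        rw [Finset.disjoint_left]
        intro p hpI hpJ
        obtain ⟨hpa, hpb⟩ := hlabel I p hpI
        obtain ⟨hqa, hqb⟩ := hlabel J p hpJ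
        rcases tmpl_sep hΔ I hI J hJ hIJ with h | h <;> omega
      have hcard : ((tmpl Δ T r₀).biUnion N).card = g r₀ := by
        rw [Finset.card_biUnion hdisj]
        exact Finset.sum_congr rfl (fun I _ => hN2 I)
      rw [hcard]
      exact hmain
end

section
/- Let (G,λ) be a temporal graph, let Δ∈ℕ, and let M be a Δ-temporal matching of (G,λ). Let e be an edge of G with t_1 ∈ λ(e), t_2 ∈ λ(e), and t_1 < t_2 ≤ Δ. If (e,t_1) ∉ M and (e,t_2) ∈ M, then M' = (M ∖ {(e,t_2)}) ∪ {(e,t_1)} is a Δ-temporal matching of (G,λ). -/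
variable {V : Type*}

/-- If `M` is a Δ-temporal matching, `t₁ < t₂ ≤ Δ` are both labels of an
edge `e`, `(e,t₁) ∉ M` and `(e,t₂) ∈ M`, then `(M \ {(e,t₂)}) ∪ {(e,t₁)}` is again a
Δ-temporal matching. -/
theorem stmt14 {V : Type*} [DecidableEq V]
    (lab : Sym2 V → Finset ℕ) (Δ : ℕ) (hpos : ∀ e, ∀ t ∈ lab e, 1 ≤ t)
    (M : Finset (Sym2 V × ℕ)) (hM : IsTM lab Δ M)
    (e : Sym2 V) (t1 t2 : ℕ) (h1 : t1 ∈ lab e) (h2 : t2 ∈ lab e)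
    (hlt : t1 < t2) (ht2 : t2 ≤ Δ)
    (hnotin : (e, t1) ∉ M) (hin : (e, t2) ∈ M) :
    IsTM lab Δ (insert (e, t1) (M.erase (e, t2))) := by
  obtain ⟨hTE, hInd⟩ := hM
  have hdiag : ¬ e.IsDiag := (hTE _ hin).1
  -- key: any q in M, q ≠ (e,t2), is Δ-indep from (e,t1)
  have key : ∀ q ∈ M, q ≠ (e, t2) → DIndep Δ (e, t1) q ∧ DIndep Δ q (e, t1) := by
    intro q hq hne
    have h := hInd (e, t2) hin q hq (Ne.symm hne)
    have hq1 : 1 ≤ q.2 := hpos _ _ (hTE q hq).2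
    rcases h with hdisj | habs
    · constructor
      · left; exact hdisj
      · left; intro v hv hv'; exact hdisj v hv' hv
    · constructor
      · right; simp only [Int.natAbs_le_iff_sq_le] at *; omega
      · right; omega
  constructor
  · intro p hp
    rcases Finset.mem_insert.mp hp with rfl | hp
    · exact ⟨hdiag, h1⟩
    · exact hTE p (Finset.mem_of_mem_erase hp)
  · intro p hp q hq hpq
    rcases Finset.mem_insert.mp hp with rfl | hp
    · rcases Finset.mem_insert.mp hq with rfl | hq
      · exact absurd rfl hpq
      · exact (key q (Finset.mem_of_mem_erase hq) (Finset.ne_of_mem_erase hq)).1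
    · rcases Finset.mem_insert.mp hq with rfl | hq
      · exact (key p (Finset.mem_of_mem_erase hp) (Finset.ne_of_mem_erase hp)).2
      · exact hInd p (Finset.mem_of_mem_erase hp) q (Finset.mem_of_mem_erase hq) hpq
end

section
/- Let 𝒢=(G,λ) be a temporal graph of lifetime T, let ν = ν(G) be the maximum matching size of the underlying graph G, and let Δ, ℓ be natural numbers with ℓΔ ≤ T. Then there exists an ℓ-complete family ℳ of Δ-temporal matchings of 𝒢|_{[Δ(ℓ−1)+1, Δℓ]} with |ℳ| ≤ C(5νΔ, 5ν), the binomial coefficient of 5νΔ over 5ν. -/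
variable {V : Type*}

/-- A family `Fam` of Δ-temporal matchings of `𝒢|_{[Δ(ℓ-1)+1, Δℓ]}` is ℓ-complete if
for every Δ-temporal matching `M` of 𝒢 there is an `M' ∈ Fam` such that
`(M \ M|_{[Δ(ℓ-1)+1, Δℓ]}) ∪ M'` is a Δ-temporal matching of 𝒢 of size at least `|M|`. -/
def LComplete {V : Type*} [DecidableEq V] (lab : Sym2 V → Finset ℕ) (Δ l : ℕ)
    (Fam : Finset (Finset (Sym2 V × ℕ))) : Prop :=
  (∀ M' ∈ Fam, IsTM (trestrict lab (Finset.Icc (Δ * (l - 1) + 1) (Δ * l))) Δ M') ∧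
  ∀ M : Finset (Sym2 V × ℕ), IsTM lab Δ M →
    ∃ M' ∈ Fam,
      IsTM lab Δ
        (M.filter (fun p => p.2 ∉ Finset.Icc (Δ * (l - 1) + 1) (Δ * l)) ∪ M') ∧
      M.card ≤
        (M.filter (fun p => p.2 ∉ Finset.Icc (Δ * (l - 1) + 1) (Δ * l)) ∪ M').card


set_option linter.unusedSectionVars false
set_option maxHeartbeats 1000000

section BollobasAux

open Finset

variable {n m a : ℕ}

noncomputable def reindexOfData (P : Finset (Fin m)) (hP : P.card = a) (ham : a ≤ m) :
    Fin m ≃ Fin m :=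
  letI hPc : (univ \ P).card = m - a := by
    rw [Finset.card_sdiff_of_subset (subset_univ _), Finset.card_univ, Fintype.card_fin, hP]
  letI eP := P.orderIsoOfFin hP
  letI ePc := (univ \ P).orderIsoOfFin hPc
  letI sumCast : Fin m ≃ Fin a ⊕ Fin (m - a) :=
    (finCongr (by omega : m = a + (m - a))).trans finSumFinEquiv.symm
  letI toSum : Fin a ⊕ Fin (m - a) ≃ ↥P ⊕ ↥(univ \ P) :=
    Equiv.sumCongr eP.toEquiv ePc.toEquiv
  letI fromSub : ↥P ⊕ ↥(univ \ P) ≃ Fin m :=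
    ((Equiv.refl ↥P).sumCongr (Equiv.subtypeEquivRight (fun x => by simp))).trans
      (Equiv.sumCompl (· ∈ P))
  sumCast.trans (toSum.trans fromSub)

lemma reindexOfData_mem_iff (P : Finset (Fin m)) (hP : P.card = a) (ham : a ≤ m)
    (j : Fin m) : reindexOfData P hP ham j ∈ P ↔ (j : ℕ) < a := by
  constructor
  · intro hmem
    by_contra h
    have h' : a ≤ (j : ℕ) := by omega
    revert hmem
    unfold reindexOfData
    simp only [Equiv.trans_apply]
    have hj2 : (j : ℕ) - a < m - a := by omega
    have : (finCongr (by omega : m = a + (m - a))) j = Fin.natAdd a ⟨(j : ℕ) - a, hj2⟩ := by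
      ext; simp; omega
    rw [this, finSumFinEquiv_symm_apply_natAdd]
    simp only [Equiv.sumCongr_apply, Sum.map_inr, Equiv.trans_apply, Equiv.sumCompl_apply_inr]
    intro hmem
    have h2 := (Equiv.subtypeEquivRight (p := fun x => x ∈ univ \ P)
      (q := fun x => ¬ x ∈ P) (fun x => by simp)
      (((univ \ P).orderIsoOfFin (by
        rw [Finset.card_sdiff_of_subset (subset_univ _), Finset.card_univ, Fintype.card_fin, hP]))
        ⟨(j : ℕ) - a, hj2⟩)).2
    exact h2 hmem
  · intro h
    unfold reindexOfData
    simp only [Equiv.trans_apply]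
    have : (finCongr (by omega : m = a + (m - a))) j = Fin.castAdd (m - a) ⟨j, h⟩ := by
      ext; simp
    rw [this, finSumFinEquiv_symm_apply_castAdd]
    simp only [Equiv.sumCongr_apply, Sum.map_inl, Equiv.trans_apply, Equiv.sumCompl_apply_inl]
    exact ((P.orderIsoOfFin hP) ⟨(j:ℕ), h⟩).2

noncomputable def permOfData (T : Finset (Fin n)) (hT : T.card = m)
    (P : Finset (Fin m)) (hP : P.card = a) (ham : a ≤ m) : Equiv.Perm (Fin n) :=
  Equiv.Perm.ofSubtype
    (((T.orderIsoOfFin hT).toEquiv.symm.trans (reindexOfData P hP ham)).trans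
      (T.orderIsoOfFin hT).toEquiv)

lemma permOfData_symm_apply_of_mem (T : Finset (Fin n)) (hT : T.card = m)
    (P : Finset (Fin m)) (hP : P.card = a) (ham : a ≤ m) {v : Fin n} (hv : v ∈ T) :
    (permOfData T hT P hP ham).symm v =
      ((T.orderIsoOfFin hT) ((reindexOfData P hP ham).symm
        ((T.orderIsoOfFin hT).symm ⟨v, hv⟩)) : Fin n) := by
  unfold permOfData
  rw [← Equiv.Perm.inv_def, ← MonoidHom.map_inv]
  rw [Equiv.Perm.ofSubtype_apply_of_mem _ hv]
  simp [Equiv.Perm.inv_def, Equiv.symm_trans_apply]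

lemma permOfData_symm_apply_of_not_mem (T : Finset (Fin n)) (hT : T.card = m)
    (P : Finset (Fin m)) (hP : P.card = a) (ham : a ≤ m) {v : Fin n} (hv : ¬ v ∈ T) :
    (permOfData T hT P hP ham).symm v = v := by
  unfold permOfData
  rw [← Equiv.Perm.inv_def, ← MonoidHom.map_inv]
  exact Equiv.Perm.ofSubtype_apply_of_not_mem _ hv

lemma image_permOfData_symm (T : Finset (Fin n)) (hT : T.card = m)
    (P : Finset (Fin m)) (hP : P.card = a) (ham : a ≤ m) :
    T.image (permOfData T hT P hP ham).symm = T := by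
  apply Finset.eq_of_subset_of_card_le
  · intro x hx
    simp only [Finset.mem_image] at hx
    obtain ⟨v, hv, rfl⟩ := hx
    rw [permOfData_symm_apply_of_mem T hT P hP ham hv]
    exact ((T.orderIsoOfFin hT) _).2
  · rw [Finset.card_image_of_injective _ (Equiv.injective _)]

lemma permOfData_congr (T1 T2 : Finset (Fin n)) (h : T1 = T2) (h1 : T1.card = m)
    (h2 : T2.card = m) (P : Finset (Fin m)) (hP : P.card = a) (ham : a ≤ m) :
    permOfData T1 h1 P hP ham = permOfData T2 h2 P hP ham := by
  subst h; rfl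

variable {Ω : Type*} [Fintype Ω] [DecidableEq Ω]

lemma count_event (A B : Finset Ω) (hdisj : ∀ x ∈ A, ¬ x ∈ B) :
    (univ : Finset (Ω ≃ Fin (Fintype.card Ω))).card ≤
      ((univ : Finset (Ω ≃ Fin (Fintype.card Ω))).filter
        (fun σ => ∀ x ∈ A, ∀ y ∈ B, σ x < σ y)).card * ((A ∪ B).card).choose A.card := by
  classical
  set n := Fintype.card Ω
  set m := (A ∪ B).card with hm
  set a := A.card with ha
  have ham : a ≤ m := Finset.card_le_card Finset.subset_union_left
  set E := (univ : Finset (Ω ≃ Fin n)).filter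
      (fun σ => ∀ x ∈ A, ∀ y ∈ B, σ x < σ y) with hE
  set pats := Finset.powersetCard a (univ : Finset (Fin m)) with hpats
  have himgcard : ∀ σ : Ω ≃ Fin n, ((A ∪ B).image σ).card = m :=
    fun σ => Finset.card_image_of_injective _ (Equiv.injective σ)
  set recon : (Ω ≃ Fin n) × Finset (Fin m) → (Ω ≃ Fin n) := fun z =>
    if h : z.2.card = a then
      z.1.trans (permOfData ((A ∪ B).image z.1) (himgcard z.1) z.2 h ham) else z.1
    with hrecon
  have hsurj : Set.SurjOn recon ↑(E ×ˢ pats) ↑(univ : Finset (Ω ≃ Fin n)) := by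
    intro τ _
    set T := (A ∪ B).image τ with hT
    have hTc : T.card = m := himgcard τ
    set inner := T.orderIsoOfFin hTc with hinner
    have hmemT : ∀ x ∈ A ∪ B, τ x ∈ T := fun x hx => Finset.mem_image_of_mem _ hx
    set P : Finset (Fin m) := A.attach.image
      (fun x => inner.symm ⟨τ x.1, hmemT x.1 (Finset.mem_union_left _ x.2)⟩) with hPdef
    have hPc : P.card = a := by
      rw [hPdef, Finset.card_image_of_injective, Finset.card_attach]
      intro x y hxy
      have := congrArg (fun z => ((inner z : ↥T) : Fin n)) hxy
      simp only [OrderIso.apply_symm_apply] at this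
      exact Subtype.ext (Equiv.injective τ this)
    set u := permOfData T hTc P hPc ham with hu
    set σ := τ.trans u.symm with hσ
    have hkey : ∀ x (hx : x ∈ A ∪ B), σ x =
        ((inner ((reindexOfData P hPc ham).symm (inner.symm ⟨τ x, hmemT x hx⟩))) : Fin n) := by
      intro x hx
      rw [hσ]
      simp only [Equiv.trans_apply]
      rw [hu, permOfData_symm_apply_of_mem T hTc P hPc ham (hmemT x hx)]
    have hmemP : ∀ x (hx : x ∈ A), inner.symm ⟨τ x, hmemT x (Finset.mem_union_left _ hx)⟩ ∈ P := by
      intro x hx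
      rw [hPdef]
      exact Finset.mem_image_of_mem _ (Finset.mem_attach _ ⟨x, hx⟩)
    have hnotP : ∀ y (hy : y ∈ B),
        ¬ inner.symm ⟨τ y, hmemT y (Finset.mem_union_right _ hy)⟩ ∈ P := by
      intro y hy hmem
      rw [hPdef] at hmem
      simp only [Finset.mem_image] at hmem
      obtain ⟨x, _, hxy⟩ := hmem
      have := congrArg (fun z => ((inner z : ↥T) : Fin n)) hxy
      simp only [OrderIso.apply_symm_apply] at this
      have : (x : Ω) = y := Equiv.injective τ this
      exact hdisj x.1 x.2 (this ▸ hy)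
    have hσE : σ ∈ E := by
      rw [hE, Finset.mem_filter]
      refine ⟨Finset.mem_univ _, ?_⟩
      intro x hx y hy
      rw [hkey x (Finset.mem_union_left _ hx), hkey y (Finset.mem_union_right _ hy)]
      have h1 : ((reindexOfData P hPc ham).symm
          (inner.symm ⟨τ x, hmemT x (Finset.mem_union_left _ hx)⟩) : ℕ) < a := by
        rw [← reindexOfData_mem_iff P hPc ham]
        rw [Equiv.apply_symm_apply]
        exact hmemP x hx
      have h2 : ¬ ((reindexOfData P hPc ham).symm
          (inner.symm ⟨τ y, hmemT y (Finset.mem_union_right _ hy)⟩) : ℕ) < a := by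
        rw [← reindexOfData_mem_iff P hPc ham]
        rw [Equiv.apply_symm_apply]
        exact hnotP y hy
      have hlt : (reindexOfData P hPc ham).symm
            (inner.symm ⟨τ x, hmemT x (Finset.mem_union_left _ hx)⟩) <
          (reindexOfData P hPc ham).symm
            (inner.symm ⟨τ y, hmemT y (Finset.mem_union_right _ hy)⟩) := by
        rw [Fin.lt_def]; omega
      have := (inner.lt_iff_lt).2 hlt
      exact Subtype.coe_lt_coe.2 this
    refine ⟨(σ, P), ?_, ?_⟩
    · rw [Finset.coe_product]
      refine Set.mem_prod.2 ⟨hσE, ?_⟩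
      simp only [hpats, Finset.coe_sort_coe, Finset.mem_coe, Finset.mem_powersetCard]
      exact ⟨Finset.subset_univ _, hPc⟩
    · show recon (σ, P) = τ
      rw [hrecon]
      simp only []
      rw [dif_pos hPc]
      have himgσ : (A ∪ B).image σ = T := by
        rw [hσ]
        have : (A ∪ B).image (τ.trans u.symm) = ((A ∪ B).image τ).image u.symm := by
          rw [Finset.image_image]; rfl
        rw [this, ← hT, hu, image_permOfData_symm]
      rw [permOfData_congr _ _ himgσ _ hTc P hPc ham]
      rw [hσ]
      ext z
      simp [hu]
  have hcard := Finset.card_le_card_of_surjOn recon hsurj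
  calc (univ : Finset (Ω ≃ Fin n)).card ≤ (E ×ˢ pats).card := hcard
    _ = E.card * ((A ∪ B).card).choose A.card := by
        rw [Finset.card_product, hpats, Finset.card_powersetCard, Finset.card_univ,
          Fintype.card_fin]

lemma choose_mono_right {n k k' : ℕ} (hkk : k ≤ k') (h2 : 2 * k' ≤ n) :
    n.choose k ≤ n.choose k' := by
  induction k' with
  | zero => simp_all
  | succ j ih =>
    rcases Nat.lt_or_ge k (j+1) with h | h
    · have hj : k ≤ j := by omega
      have h2' : 2 * j ≤ n := by omega
      refine (ih hj h2').trans ?_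
      have hrec := Nat.choose_succ_right_eq n j
      have hle : n.choose j * (j + 1) ≤ n.choose j * (n - j) :=
        Nat.mul_le_mul_left _ (by omega)
      rw [← hrec] at hle
      exact Nat.le_of_mul_le_mul_right hle (by omega)
    · have : k = j + 1 := by omega
      subst this; exact le_rfl


end BollobasAux

section BollobasMain
open Finset
variable {Ω : Type*} [Fintype Ω] [DecidableEq Ω]

lemma bollobas {ι : Type*} [DecidableEq ι] (s : Finset ι) (A B : ι → Finset Ω)
    (p q : ℕ) (hpq : p ≤ q)
    (hA : ∀ i ∈ s, (A i).card ≤ p) (hB : ∀ i ∈ s, (B i).card ≤ q)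
    (hdisj : ∀ i ∈ s, ∀ x ∈ A i, ¬ x ∈ B i)
    (hcross : ∀ i ∈ s, ∀ j ∈ s, i ≠ j → ((A i) ∩ (B j)).Nonempty) :
    s.card ≤ (p + q).choose p := by
  classical
  set n := Fintype.card Ω
  set E : ι → Finset (Ω ≃ Fin n) := fun i =>
    (univ : Finset (Ω ≃ Fin n)).filter (fun σ => ∀ x ∈ A i, ∀ y ∈ B i, σ x < σ y) with hE
  have hdisjE : ∀ i ∈ s, ∀ j ∈ s, i ≠ j → Disjoint (E i) (E j) := by
    intro i hi j hj hij
    rw [Finset.disjoint_left]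
    intro σ hσi hσj
    obtain ⟨x, hx⟩ := hcross i hi j hj hij
    obtain ⟨y, hy⟩ := hcross j hj i hi hij.symm
    rw [Finset.mem_inter] at hx hy
    rw [hE, Finset.mem_filter] at hσi hσj
    have h1 := hσi.2 x hx.1 y hy.2
    have h2 := hσj.2 y hy.1 x hx.2
    exact absurd (h1.trans h2) (lt_irrefl _)
  have hperE : ∀ i ∈ s, (univ : Finset (Ω ≃ Fin n)).card ≤ (E i).card * (p + q).choose p := by
    intro i hi
    have h1 := count_event (A i) (B i) (hdisj i hi)
    refine h1.trans (Nat.mul_le_mul_left _ ?_)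
    have hm : ((A i) ∪ (B i)).card ≤ p + q :=
      (Finset.card_union_le _ _).trans (Nat.add_le_add (hA i hi) (hB i hi))
    calc ((A i ∪ B i).card).choose (A i).card
        ≤ (p + q).choose (A i).card := Nat.choose_le_choose _ hm
      _ ≤ (p + q).choose p := choose_mono_right (hA i hi) (by omega)
  have hsum : s.card * (univ : Finset (Ω ≃ Fin n)).card ≤
      (univ : Finset (Ω ≃ Fin n)).card * (p + q).choose p := by
    calc s.card * (univ : Finset (Ω ≃ Fin n)).card
        = ∑ _i ∈ s, (univ : Finset (Ω ≃ Fin n)).card := by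
          rw [Finset.sum_const, smul_eq_mul]
      _ ≤ ∑ i ∈ s, (E i).card * (p + q).choose p := Finset.sum_le_sum hperE
      _ = (∑ i ∈ s, (E i).card) * (p + q).choose p := by rw [Finset.sum_mul]
      _ = (s.biUnion E).card * (p + q).choose p := by rw [Finset.card_biUnion hdisjE]
      _ ≤ (univ : Finset (Ω ≃ Fin n)).card * (p + q).choose p := by
          exact Nat.mul_le_mul_right _ (Finset.card_le_card (Finset.subset_univ _))
  have hpos : 0 < (univ : Finset (Ω ≃ Fin n)).card := by
    rw [Finset.card_univ]
    exact Fintype.card_pos_iff.2 ⟨Fintype.equivFin Ω⟩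
  have := hsum
  rw [mul_comm s.card _] at this
  exact Nat.le_of_mul_le_mul_left this hpos


end BollobasMain

section Helpers17
variable {V : Type*} [Fintype V] [DecidableEq V]

open Finset

/-- vertex set of a Sym2 element, as a Finset. -/
noncomputable def sv (e : Sym2 V) : Finset V := by
  classical exact univ.filter (· ∈ e)

lemma mem_sv {e : Sym2 V} {v : V} : v ∈ sv e ↔ v ∈ e := by
  classical
  simp [sv]

lemma sv_card_le (e : Sym2 V) : (sv e).card ≤ 2 := by
  classical
  induction e using Sym2.ind with
  | _ x y =>
    have : sv s(x, y) ⊆ {x, y} := by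
      intro v hv
      rw [mem_sv, Sym2.mem_iff] at hv
      simp [hv]
    exact (Finset.card_le_card this).trans (Finset.card_insert_le _ _ |>.trans (by simp))

lemma sym2_exists_mem (e : Sym2 V) : ∃ v, v ∈ e := by
  induction e using Sym2.ind with
  | _ x y => exact ⟨x, Sym2.mem_mk_left _ _⟩

/-- a pairwise vertex-disjoint, time-close family of time edges is no bigger than ν. -/
lemma card_le_matchNum_of_close (lab : Sym2 V → Finset ℕ) (Δ : ℕ)
    (N : Finset (Sym2 V × ℕ))
    (hedge : ∀ p ∈ N, ¬p.1.IsDiag ∧ (lab p.1).Nonempty)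
    (hind : ∀ p ∈ N, ∀ q ∈ N, p ≠ q → DIndep Δ p q)
    (hclose : ∀ p ∈ N, ∀ q ∈ N, (((p.2 : ℤ) - (q.2 : ℤ))).natAbs < Δ) :
    N.card ≤ matchNum (ugraph lab) := by
  classical
  have hinj : Set.InjOn (Prod.fst : Sym2 V × ℕ → Sym2 V) ↑N := by
    intro p hp q hq hpq
    by_contra hne
    rcases hind p hp q hq hne with hd | htime
    · obtain ⟨v, hv⟩ := sym2_exists_mem p.1
      exact hd v hv (hpq ▸ hv)
    · exact absurd htime (not_le.2 (hclose p hp q hq))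
  have hcard : (N.image Prod.fst).card = N.card := Finset.card_image_of_injOn hinj
  have hmatch : IsMatchingF (ugraph lab) (N.image Prod.fst) := by
    constructor
    · intro e he
      rw [Finset.mem_image] at he
      obtain ⟨⟨e, t⟩, hp, rfl⟩ := he
      have h1 := (hedge _ hp).1
      have h2 := (hedge _ hp).2
      simp only at h1 h2 ⊢
      induction e using Sym2.ind with
      | _ x y =>
        rw [SimpleGraph.mem_edgeSet]
        exact ⟨fun hxy => h1 (Sym2.mk_isDiag_iff.2 hxy), h2⟩
    · intro e he e' he' hne v hv hv'
      rw [Finset.mem_image] at he he'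
      obtain ⟨p, hp, rfl⟩ := he
      obtain ⟨q, hq, rfl⟩ := he'
      have hpq : p ≠ q := fun h => hne (by rw [h])
      rcases hind p hp q hq hpq with hd | htime
      · exact hd v hv hv'
      · exact absurd htime (not_le.2 (hclose p hp q hq))
  have hmem : N.card ∈ {k | ∃ R : Finset (Sym2 V), IsMatchingF (ugraph lab) R ∧ R.card = k} :=
    ⟨N.image Prod.fst, hmatch, hcard⟩
  have hbdd : BddAbove {k | ∃ R : Finset (Sym2 V), IsMatchingF (ugraph lab) R ∧ R.card = k} := by
    refine ⟨Fintype.card (Sym2 V), ?_⟩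
    rintro k ⟨R, _, rfl⟩
    exact Finset.card_le_univ R
  exact le_csSup hbdd hmem

end Helpers17

/-- For a temporal graph 𝒢 of lifetime `T` with `ℓΔ ≤ T`, there exists
an ℓ-complete family of Δ-temporal matchings of `𝒢|_{[Δ(ℓ-1)+1, Δℓ]}` of size at most
`C(5νΔ, 5ν)`, where `ν = ν(G)` is the maximum matching size of the underlying graph. -/
theorem stmt17 {V : Type*} [Fintype V] [DecidableEq V]
    (lab : Sym2 V → Finset ℕ) (T Δ l : ℕ) (hT : HasLifetime lab T)
    (hΔ : 1 ≤ Δ) (hl : 1 ≤ l) (hle : l * Δ ≤ T) :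
    ∃ Fam : Finset (Finset (Sym2 V × ℕ)),
      LComplete lab Δ l Fam ∧
      Fam.card ≤
        Nat.choose (5 * matchNum (ugraph lab) * Δ) (5 * matchNum (ugraph lab)) := by
  classical
  set ν := matchNum (ugraph lab) with hν
  set W := Finset.Icc (Δ * (l - 1) + 1) (Δ * l) with hW
  obtain ⟨l', rfl⟩ : ∃ l', l = l' + 1 := ⟨l - 1, by omega⟩
  have haΔ : Δ * (l' + 1 - 1) + Δ = Δ * (l' + 1) := by simp [Nat.mul_succ]
  set A := Δ * (l' + 1 - 1) with hA
  have hWiff : ∀ t, t ∈ W ↔ A + 1 ≤ t ∧ t ≤ A + Δ := by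
    intro t
    rw [hW, Finset.mem_Icc, hA, haΔ]
  -- window TMs: times in window, and size at most ν
  have hWTM : ∀ M' : Finset (Sym2 V × ℕ), IsTM (trestrict lab W) Δ M' →
      (∀ p ∈ M', p.2 ∈ W) ∧ M'.card ≤ ν := by
    intro M' h
    have htimes : ∀ p ∈ M', p.2 ∈ W := by
      intro p hp
      have := (h.1 p hp).2
      rw [trestrict, Finset.mem_inter] at this
      exact this.2
    refine ⟨htimes, ?_⟩
    refine card_le_matchNum_of_close lab Δ M' ?_ h.2 ?_
    · intro p hp
      refine ⟨(h.1 p hp).1, ?_⟩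
      have := (h.1 p hp).2
      rw [trestrict, Finset.mem_inter] at this
      exact ⟨p.2, this.1⟩
    · intro p hp q hq
      have h1 := (hWiff p.2).1 (htimes p hp)
      have h2 := (hWiff q.2).1 (htimes q hq)
      omega
  -- the window part of a TM is a TM of the restriction
  have hRTM : ∀ M : Finset (Sym2 V × ℕ), IsTM lab Δ M →
      IsTM (trestrict lab W) Δ (M.filter (fun p => p.2 ∈ W)) := by
    intro M hM
    constructor
    · intro p hp
      rw [Finset.mem_filter] at hp
      refine ⟨(hM.1 p hp.1).1, ?_⟩
      rw [trestrict, Finset.mem_inter]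
      exact ⟨(hM.1 p hp.1).2, hp.2⟩
    · intro p hp q hq hne
      rw [Finset.mem_filter] at hp hq
      exact hM.2 p hp.1 q hq.1 hne
  -- the window part of a TM lies in the ground product set
  have hRsub : ∀ M : Finset (Sym2 V × ℕ),
      M.filter (fun p => p.2 ∈ W) ⊆ (Finset.univ : Finset (Sym2 V)) ×ˢ W := by
    intro M p hp
    rw [Finset.mem_filter] at hp
    rw [Finset.mem_product]
    exact ⟨Finset.mem_univ _, hp.2⟩
  -- cardinality split
  have hsplit : ∀ M : Finset (Sym2 V × ℕ),
      (M.filter (fun p => p.2 ∉ W)).card + (M.filter (fun p => p.2 ∈ W)).card = M.card := by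
    intro M
    have := Finset.card_filter_add_card_filter_not
      (s := M) (p := fun p => p.2 ∉ W)
    have hcongr : M.filter (fun p => ¬ p.2 ∉ W) = M.filter (fun p => p.2 ∈ W) := by
      apply Finset.filter_congr
      intro p _
      simp
    rw [hcongr] at this
    exact this
  -- disjointness of non-window part with a window TM
  have hdisjU : ∀ (M M' : Finset (Sym2 V × ℕ)), (∀ p ∈ M', p.2 ∈ W) →
      Disjoint (M.filter (fun p => p.2 ∉ W)) M' := by
    intro M M' hM'
    rw [Finset.disjoint_left]
    intro p hp hp'
    rw [Finset.mem_filter] at hp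
    exact hp.2 (hM' p hp')
  have hcardU : ∀ (M M' : Finset (Sym2 V × ℕ)), (∀ p ∈ M', p.2 ∈ W) →
      (M.filter (fun p => p.2 ∉ W) ∪ M').card
        = (M.filter (fun p => p.2 ∉ W)).card + M'.card := by
    intro M M' hM'
    exact Finset.card_union_of_disjoint (hdisjU M M' hM')
  -- the set of all window TMs
  set Tall : Finset (Finset (Sym2 V × ℕ)) :=
    (((Finset.univ : Finset (Sym2 V)) ×ˢ W).powerset).filter
      (fun M' => IsTM (trestrict lab W) Δ M') with hTall
  have hTallmem : ∀ M' : Finset (Sym2 V × ℕ),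
      M' ∈ Tall ↔ (M' ⊆ (Finset.univ : Finset (Sym2 V)) ×ˢ W ∧ IsTM (trestrict lab W) Δ M') := by
    intro M'
    rw [hTall, Finset.mem_filter, Finset.mem_powerset]
  -- union with the window part recovers M
  have hrecover : ∀ M : Finset (Sym2 V × ℕ),
      M.filter (fun p => p.2 ∉ W) ∪ M.filter (fun p => p.2 ∈ W) = M := by
    intro M
    have := Finset.filter_union_filter_not_eq (fun p : Sym2 V × ℕ => p.2 ∉ W) M
    have hcongr : M.filter (fun p => ¬ p.2 ∉ W) = M.filter (fun p => p.2 ∈ W) := by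
      apply Finset.filter_congr
      intro p _
      simp
    rw [hcongr] at this
    exact this
  rcases eq_or_lt_of_le hΔ with hΔ1 | hΔ2
  ·
    -- case Δ = 1
    subst hΔ1
    have hWone : ∀ t, t ∈ W ↔ t = A + 1 := by
      intro t
      rw [hWiff]
      omega
    have hTne : Tall.Nonempty := by
      refine ⟨∅, (hTallmem ∅).2 ⟨Finset.empty_subset _, ?_, ?_⟩⟩
      · intro p hp
        exact absurd hp (Finset.notMem_empty p)
      · intro p hp
        exact absurd hp (Finset.notMem_empty p)
    obtain ⟨F₁, hF₁mem, hF₁max⟩ := Finset.exists_max_image Tall Finset.card hTne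
    have hF₁TM := ((hTallmem F₁).1 hF₁mem).2
    refine ⟨{F₁}, ⟨?_, ?_⟩, ?_⟩
    · intro M' hM'
      rw [Finset.mem_singleton] at hM'
      subst hM'
      exact hF₁TM
    · intro M hM
      refine ⟨F₁, Finset.mem_singleton_self _, ?_, ?_⟩
      · constructor
        · intro p hp
          rcases Finset.mem_union.1 hp with h | h
          · exact hM.1 p (Finset.mem_of_mem_filter p h)
          · have h1 := hF₁TM.1 p h
            refine ⟨h1.1, ?_⟩
            have := h1.2
            rw [trestrict, Finset.mem_inter] at this
            exact this.1
        · intro p hp q hq hne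
          have hcross : ∀ x y : Sym2 V × ℕ,
              x ∈ M.filter (fun p => p.2 ∉ W) → y ∈ F₁ → DIndep 1 x y := by
            intro x y hx hy
            right
            have hx2 : x.2 ∉ W := (Finset.mem_filter.1 hx).2
            have hy2 : y.2 ∈ W := ((hWTM F₁ hF₁TM).1) y hy
            have : x.2 ≠ y.2 := fun h => hx2 (h ▸ hy2)
            omega
          rcases Finset.mem_union.1 hp with h1 | h1 <;> rcases Finset.mem_union.1 hq with h2 | h2
          · exact hM.2 p (Finset.mem_of_mem_filter p h1) q (Finset.mem_of_mem_filter q h2) hne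
          · exact hcross p q h1 h2
          · rcases hcross q p h2 h1 with hd | ht
            · left
              intro v hv hv'
              exact hd v hv' hv
            · right
              omega
          · exact hF₁TM.2 p h1 q h2 hne
      · have hRcard : (M.filter (fun p => p.2 ∈ W)).card ≤ F₁.card := by
          refine hF₁max _ ?_
          exact (hTallmem _).2 ⟨hRsub M, hRTM M hM⟩
        have h1 := hcardU M F₁ ((hWTM F₁ hF₁TM).1)
        have h2 := hsplit M
        rw [← hW]
        omega
    · rw [Finset.card_singleton, mul_one, Nat.choose_self]

  ·
    -- case Δ ≥ 2
    set K := Δ * (l' + 1) + ν + 1 with hK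
    have hKpos : 0 < K := by omega
    set enc : ℕ → Fin K := fun t => ⟨t % K, Nat.mod_lt _ hKpos⟩ with henc
    have hencinj : ∀ x y : ℕ, x ≤ Δ * (l' + 1) + ν → y ≤ Δ * (l' + 1) + ν →
        enc x = enc y → x = y := by
      intro x y hx hy h
      have := congrArg Fin.val h
      rw [henc] at this
      simp only at this
      rwa [Nat.mod_eq_of_lt (by omega), Nat.mod_eq_of_lt (by omega)] at this
    have hWle : ∀ t ∈ W, t ≤ Δ * (l' + 1) := by
      intro t ht
      exact ((hWiff t).1 ht).2.trans (by rw [hA]; omega)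
    set pr : V → ℕ → (Option V × Fin K) := fun v t => (some v, enc t) with hpr
    set tok : ℕ → (Option V × Fin K) := fun j => (none, enc j) with htok
    set φhat : Finset (Sym2 V × ℕ) → Finset (Option V × Fin K) := fun M' =>
      (M'.biUnion (fun p => (sv p.1).image (fun v => pr v p.2))) ∪
        ((Finset.Icc (M'.card + 1) ν).image tok) with hφhat
    set Bhat : Finset (Sym2 V × ℕ) → Finset (Option V × Fin K) := fun M =>
      ((M.filter (fun p => p.2 ∉ W)).biUnion (fun p =>
        (W.filter (fun t : ℕ => ((t : ℤ) - (p.2 : ℤ)).natAbs < Δ)).biUnion (fun t =>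
          (sv p.1).image (fun v => pr v t)))) ∪
        ((Finset.Icc 1 ((M.filter (fun p => p.2 ∈ W)).card)).image tok) with hBhat
    set works : Finset (Sym2 V × ℕ) → Finset (Sym2 V × ℕ) → Prop := fun M M' =>
      IsTM lab Δ (M.filter (fun p => p.2 ∉ W) ∪ M') ∧
        M.card ≤ (M.filter (fun p => p.2 ∉ W) ∪ M').card with hworks
    have hφcard : ∀ M' : Finset (Sym2 V × ℕ), IsTM (trestrict lab W) Δ M' →
        (φhat M').card ≤ 2 * ν := by
      intro M' hM'
      have hc := (hWTM M' hM').2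
      rw [hφhat]
      simp only []
      refine (Finset.card_union_le _ _).trans ?_
      have h1 : (M'.biUnion fun p => (sv p.1).image fun v => pr v p.2).card ≤ 2 * M'.card := by
        have hb := Finset.card_biUnion_le (s := M')
          (t := fun p => (sv p.1).image fun v => pr v p.2)
        refine hb.trans ?_
        have hs : ∀ p ∈ M', ((sv p.1).image fun v => pr v p.2).card ≤ 2 :=
          fun p _ => (Finset.card_image_le).trans (sv_card_le p.1)
        refine (Finset.sum_le_sum hs).trans ?_
        rw [Finset.sum_const, smul_eq_mul]
        omega
      have h2 : ((Finset.Icc (M'.card + 1) ν).image tok).card ≤ ν - M'.card := by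
        refine (Finset.card_image_le).trans ?_
        rw [Nat.card_Icc]
        omega
      omega

    have hBcard : ∀ M : Finset (Sym2 V × ℕ), IsTM lab Δ M →
        (Bhat M).card ≤ 4 * ν * (Δ - 1) + ν := by
      intro M hM
      have hRc : (M.filter (fun p => p.2 ∈ W)).card ≤ ν := (hWTM _ (hRTM M hM)).2
      rw [hBhat]
      simp only []
      refine (Finset.card_union_le _ _).trans ?_
      have h2 : ((Finset.Icc 1 ((M.filter (fun p => p.2 ∈ W)).card)).image tok).card ≤ ν := by
        refine (Finset.card_image_le).trans ?_
        rw [Nat.card_Icc]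
        omega
      have h1 : ((M.filter (fun p => p.2 ∉ W)).biUnion fun p =>
          (W.filter (fun t : ℕ => ((t : ℤ) - (p.2 : ℤ)).natAbs < Δ)).biUnion fun t =>
            (sv p.1).image fun v => pr v t).card ≤ 4 * ν * (Δ - 1) := by
        have hb := Finset.card_biUnion_le (s := M.filter (fun p => p.2 ∉ W))
          (t := fun p => (W.filter (fun t : ℕ => ((t : ℤ) - (p.2 : ℤ)).natAbs < Δ)).biUnion
            fun t => (sv p.1).image fun v => pr v t)
        refine hb.trans ?_
        -- bound each inner set by twice the number of selected slots
        have hinner : ∀ p : Sym2 V × ℕ,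
            ((W.filter (fun t : ℕ => ((t : ℤ) - (p.2 : ℤ)).natAbs < Δ)).biUnion fun t =>
              (sv p.1).image fun v => pr v t).card ≤
            2 * (W.filter (fun t : ℕ => ((t : ℤ) - (p.2 : ℤ)).natAbs < Δ)).card := by
          intro p
          have hb2 := Finset.card_biUnion_le
            (s := W.filter (fun t : ℕ => ((t : ℤ) - (p.2 : ℤ)).natAbs < Δ))
            (t := fun t => (sv p.1).image fun v => pr v t)
          refine hb2.trans ?_
          have hs : ∀ t ∈ W.filter (fun t : ℕ => ((t : ℤ) - (p.2 : ℤ)).natAbs < Δ),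
              ((sv p.1).image fun v => pr v t).card ≤ 2 :=
            fun t _ => (Finset.card_image_le).trans (sv_card_le p.1)
          refine (Finset.sum_le_sum hs).trans ?_
          rw [Finset.sum_const, smul_eq_mul]
          omega
        refine (Finset.sum_le_sum (fun p (_ : p ∈ _) => hinner p)).trans ?_
        -- now bound the sum of slot counts, splitting into left/right strips
        set LS : Sym2 V × ℕ → Prop := fun p => p.2 ≤ A ∧ A < p.2 + Δ with hLS
        set RS : Sym2 V × ℕ → Prop := fun p => A + Δ < p.2 ∧ p.2 < A + Δ + Δ with hRS
        set g : Sym2 V × ℕ → ℕ :=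
          fun p => 2 * (W.filter (fun t : ℕ => ((t : ℤ) - (p.2 : ℤ)).natAbs < Δ)).card with hg
        have hgLS : ∀ p, LS p → g p ≤ 2 * (Δ - 1) := by
          intro p hp
          rw [hg]
          simp only []
          have hsub : W.filter (fun t : ℕ => ((t : ℤ) - (p.2 : ℤ)).natAbs < Δ) ⊆
              Finset.Icc (A + 1) (A + Δ - 1) := by
            intro t ht
            rw [Finset.mem_filter] at ht
            have h1 := (hWiff t).1 ht.1
            have h2 := ht.2
            rw [Finset.mem_Icc]
            rw [hLS] at hp
            omega
          have := Finset.card_le_card hsub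
          rw [Nat.card_Icc] at this
          omega
        have hgRS : ∀ p, RS p → g p ≤ 2 * (Δ - 1) := by
          intro p hp
          rw [hg]
          simp only []
          have hsub : W.filter (fun t : ℕ => ((t : ℤ) - (p.2 : ℤ)).natAbs < Δ) ⊆
              Finset.Icc (A + 2) (A + Δ) := by
            intro t ht
            rw [Finset.mem_filter] at ht
            have h1 := (hWiff t).1 ht.1
            have h2 := ht.2
            rw [Finset.mem_Icc]
            rw [hRS] at hp
            omega
          have := Finset.card_le_card hsub
          rw [Nat.card_Icc] at this
          omega
        have hgnone : ∀ p ∈ M.filter (fun p => p.2 ∉ W), ¬ LS p → ¬ RS p → g p = 0 := by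
          intro p hpF hnLS hnRS
          rw [hg]
          simp only []
          rw [mul_eq_zero]
          right
          rw [Finset.card_eq_zero, Finset.eq_empty_iff_forall_notMem]
          intro t ht
          rw [Finset.mem_filter] at ht
          have h1 := (hWiff t).1 ht.1
          have h2 := ht.2
          have h3 : p.2 ∉ W := (Finset.mem_filter.1 hpF).2
          rw [hWiff] at h3
          rw [hLS] at hnLS
          rw [hRS] at hnRS
          omega
        -- count the strip elements
        have hstrip : ∀ (Q : Finset (Sym2 V × ℕ)), Q ⊆ M →
            (∀ p ∈ Q, ∀ q ∈ Q, (((p.2 : ℤ) - (q.2 : ℤ))).natAbs < Δ) → Q.card ≤ ν := by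
          intro Q hQ hclose
          refine card_le_matchNum_of_close lab Δ Q ?_ ?_ hclose
          · intro p hp
            exact ⟨(hM.1 p (hQ hp)).1, ⟨p.2, (hM.1 p (hQ hp)).2⟩⟩
          · intro p hp q hq hne
            exact hM.2 p (hQ hp) q (hQ hq) hne
        have hsplit1 : ∑ p ∈ (M.filter (fun p => p.2 ∉ W)).filter LS, g p +
            ∑ p ∈ (M.filter (fun p => p.2 ∉ W)).filter (fun p => ¬ LS p), g p =
            ∑ p ∈ M.filter (fun p => p.2 ∉ W), g p :=
          Finset.sum_filter_add_sum_filter_not _ _ _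
        have hsplit2 : ∑ p ∈ ((M.filter (fun p => p.2 ∉ W)).filter (fun p => ¬ LS p)).filter RS,
            g p +
            ∑ p ∈ ((M.filter (fun p => p.2 ∉ W)).filter (fun p => ¬ LS p)).filter
              (fun p => ¬ RS p), g p =
            ∑ p ∈ (M.filter (fun p => p.2 ∉ W)).filter (fun p => ¬ LS p), g p :=
          Finset.sum_filter_add_sum_filter_not _ _ _
        have hc1 : ((M.filter (fun p => p.2 ∉ W)).filter LS).card ≤ ν := by
          refine hstrip _ ?_ ?_
          · intro p hp
            exact Finset.mem_of_mem_filter p (Finset.mem_of_mem_filter p hp)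
          · intro p hp q hq
            have hp' := (Finset.mem_filter.1 hp).2
            have hq' := (Finset.mem_filter.1 hq).2
            rw [hLS] at hp' hq'
            omega
        have hc2 : (((M.filter (fun p => p.2 ∉ W)).filter (fun p => ¬ LS p)).filter RS).card
            ≤ ν := by
          refine hstrip _ ?_ ?_
          · intro p hp
            exact Finset.mem_of_mem_filter p (Finset.mem_of_mem_filter p
              (Finset.mem_of_mem_filter p hp))
          · intro p hp q hq
            have hp' := (Finset.mem_filter.1 hp).2
            have hq' := (Finset.mem_filter.1 hq).2
            rw [hRS] at hp' hq'
            omega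
        have hs1 : ∑ p ∈ (M.filter (fun p => p.2 ∉ W)).filter LS, g p ≤ ν * (2 * (Δ - 1)) := by
          refine (Finset.sum_le_sum (fun p hp => hgLS p (Finset.mem_filter.1 hp).2)).trans ?_
          rw [Finset.sum_const, smul_eq_mul]
          exact Nat.mul_le_mul_right _ hc1
        have hs2 : ∑ p ∈ ((M.filter (fun p => p.2 ∉ W)).filter (fun p => ¬ LS p)).filter RS,
            g p ≤ ν * (2 * (Δ - 1)) := by
          refine (Finset.sum_le_sum (fun p hp => hgRS p (Finset.mem_filter.1 hp).2)).trans ?_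
          rw [Finset.sum_const, smul_eq_mul]
          exact Nat.mul_le_mul_right _ hc2
        have hs3 : ∑ p ∈ ((M.filter (fun p => p.2 ∉ W)).filter (fun p => ¬ LS p)).filter
            (fun p => ¬ RS p), g p = 0 := by
          refine Finset.sum_eq_zero ?_
          intro p hp
          have hp1 := Finset.mem_filter.1 hp
          have hp2 := Finset.mem_filter.1 hp1.1
          exact hgnone p hp2.1 hp2.2 hp1.2
        have htot : ∑ p ∈ M.filter (fun p => p.2 ∉ W), g p ≤
            ν * (2 * (Δ - 1)) + ν * (2 * (Δ - 1)) := by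
          omega
        refine htot.trans ?_
        have : ν * (2 * (Δ - 1)) + ν * (2 * (Δ - 1)) = 4 * ν * (Δ - 1) := by ring
        omega
      omega

    have hwa : ∀ M : Finset (Sym2 V × ℕ), IsTM lab Δ M →
        ∀ M' : Finset (Sym2 V × ℕ), IsTM (trestrict lab W) Δ M' →
        (works M M' ↔ φhat M' ∩ Bhat M = ∅) := by
      intro M hM M' hM'
      have htimes := (hWTM M' hM').1
      have hRTMM := hRTM M hM
      have hRcard := (hWTM _ hRTMM).2
      have hM'card := (hWTM M' hM').2
      have hcU := hcardU M M' htimes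
      have hsp := hsplit M
      rw [hworks]
      simp only []
      constructor
      · rintro ⟨hTM, hcard⟩
        rw [Finset.eq_empty_iff_forall_notMem]
        intro z hz
        rw [Finset.mem_inter] at hz
        have hz1 := hz.1
        have hz2 := hz.2
        rw [hφhat] at hz1
        rw [hBhat] at hz2
        simp only [] at hz1 hz2
        rcases Finset.mem_union.1 hz1 with hz1' | hz1'
        · obtain ⟨p', hp', hv⟩ := Finset.mem_biUnion.1 hz1'
          obtain ⟨v, hvmem, hveq⟩ := Finset.mem_image.1 hv
          rcases Finset.mem_union.1 hz2 with hz2' | hz2'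
          · obtain ⟨pO, hpO, ht⟩ := Finset.mem_biUnion.1 hz2'
            obtain ⟨t, htmem, hw⟩ := Finset.mem_biUnion.1 ht
            obtain ⟨w, hwmem, hweq⟩ := Finset.mem_image.1 hw
            have heq : pr v p'.2 = pr w t := by rw [hveq, hweq]
            rw [hpr] at heq
            simp only [Prod.mk.injEq, Option.some.injEq] at heq
            have hvw : v = w := heq.1
            have htW : t ∈ W := (Finset.mem_filter.1 htmem).1
            have htp : p'.2 = t := by
              refine hencinj _ _ ?_ ?_ heq.2
              · exact (hWle _ (htimes p' hp')).trans (by omega)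
              · exact (hWle _ htW).trans (by omega)
            have hpOW : pO.2 ∉ W := (Finset.mem_filter.1 hpO).2
            have hne : p' ≠ pO := by
              intro h
              rw [h] at hp'
              exact hpOW (htimes pO hp')
            have hDI := hTM.2 p' (Finset.mem_union_right _ hp')
              pO (Finset.mem_union_left _ hpO) hne
            rcases hDI with hd | habs
            · refine hd v (mem_sv.1 hvmem) ?_
              rw [hvw]
              exact mem_sv.1 hwmem
            · have hclose := (Finset.mem_filter.1 htmem).2
              rw [← htp] at hclose
              omega
          · obtain ⟨j, hjmem, hjeq⟩ := Finset.mem_image.1 hz2'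
            rw [← hveq, hpr, htok] at hjeq
            simp only [Prod.mk.injEq] at hjeq
            exact absurd hjeq.1 (by simp)
        · obtain ⟨j, hjmem, hjeq⟩ := Finset.mem_image.1 hz1'
          rcases Finset.mem_union.1 hz2 with hz2' | hz2'
          · obtain ⟨pO, hpO, ht⟩ := Finset.mem_biUnion.1 hz2'
            obtain ⟨t, htmem, hw⟩ := Finset.mem_biUnion.1 ht
            obtain ⟨w, hwmem, hweq⟩ := Finset.mem_image.1 hw
            rw [← hjeq, htok, hpr] at hweq
            simp only [Prod.mk.injEq] at hweq
            exact absurd hweq.1 (by simp)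
          · obtain ⟨j', hj'mem, hj'eq⟩ := Finset.mem_image.1 hz2'
            have heq : tok j' = tok j := by rw [hjeq, hj'eq]
            rw [htok] at heq
            simp only [Prod.mk.injEq] at heq
            rw [Finset.mem_Icc] at hjmem hj'mem
            have hjj : j' = j := by
              refine hencinj _ _ ?_ ?_ heq.2
              · omega
              · omega
            omega
      · intro hempty
        have hnotmem : ∀ z : Option V × Fin K, z ∈ φhat M' → z ∈ Bhat M → False := by
          intro z h1 h2
          have : z ∈ φhat M' ∩ Bhat M := Finset.mem_inter.2 ⟨h1, h2⟩
          rw [hempty] at this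
          exact Finset.notMem_empty z this
        have hMR : (M.filter (fun p => p.2 ∈ W)).card ≤ M'.card := by
          by_contra hcon
          push_neg at hcon
          refine hnotmem (tok (M'.card + 1)) ?_ ?_
          · rw [hφhat]
            simp only []
            refine Finset.mem_union_right _ ?_
            refine Finset.mem_image_of_mem tok ?_
            rw [Finset.mem_Icc]
            omega
          · rw [hBhat]
            simp only []
            refine Finset.mem_union_right _ ?_
            refine Finset.mem_image_of_mem tok ?_
            rw [Finset.mem_Icc]
            omega
        refine ⟨⟨?_, ?_⟩, ?_⟩
        · intro p hp
          rcases Finset.mem_union.1 hp with h | h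
          · exact hM.1 p (Finset.mem_of_mem_filter p h)
          · have h1 := hM'.1 p h
            refine ⟨h1.1, ?_⟩
            have := h1.2
            rw [trestrict, Finset.mem_inter] at this
            exact this.1
        · intro p hp q hq hne
          rcases Finset.mem_union.1 hp with h1 | h1 <;> rcases Finset.mem_union.1 hq with h2 | h2
          · exact hM.2 p (Finset.mem_of_mem_filter p h1) q (Finset.mem_of_mem_filter q h2) hne
          · -- p in filter, q in M'
            by_contra hnd
            rw [DIndep] at hnd
            push_neg at hnd
            obtain ⟨⟨v, hv1, hv2⟩, hlt⟩ := hnd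
            refine hnotmem (pr v q.2) ?_ ?_
            · rw [hφhat]
              simp only []
              refine Finset.mem_union_left _ ?_
              refine Finset.mem_biUnion.2 ⟨q, h2, ?_⟩
              exact Finset.mem_image_of_mem _ (mem_sv.2 hv2)
            · rw [hBhat]
              simp only []
              refine Finset.mem_union_left _ ?_
              refine Finset.mem_biUnion.2 ⟨p, h1, ?_⟩
              refine Finset.mem_biUnion.2 ⟨q.2, ?_, ?_⟩
              · rw [Finset.mem_filter]
                exact ⟨htimes q h2, by omega⟩
              · exact Finset.mem_image_of_mem _ (mem_sv.2 hv1)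
          · -- p in M', q in filter
            by_contra hnd
            rw [DIndep] at hnd
            push_neg at hnd
            obtain ⟨⟨v, hv1, hv2⟩, hlt⟩ := hnd
            refine hnotmem (pr v p.2) ?_ ?_
            · rw [hφhat]
              simp only []
              refine Finset.mem_union_left _ ?_
              refine Finset.mem_biUnion.2 ⟨p, h1, ?_⟩
              exact Finset.mem_image_of_mem _ (mem_sv.2 hv1)
            · rw [hBhat]
              simp only []
              refine Finset.mem_union_left _ ?_
              refine Finset.mem_biUnion.2 ⟨q, h2, ?_⟩
              refine Finset.mem_biUnion.2 ⟨p.2, ?_, ?_⟩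
              · rw [Finset.mem_filter]
                exact ⟨htimes p h1, by omega⟩
              · exact Finset.mem_image_of_mem _ (mem_sv.2 hv2)
          · exact hM'.2 p h1 q h2 hne
        · omega

    -- Tall satisfies the completeness property
    have hTallP : (∀ M' ∈ Tall, IsTM (trestrict lab W) Δ M') ∧
        ∀ M : Finset (Sym2 V × ℕ), IsTM lab Δ M → ∃ M' ∈ Tall, works M M' := by
      constructor
      · intro M' hM'
        exact ((hTallmem M').1 hM').2
      · intro M hM
        refine ⟨M.filter (fun p => p.2 ∈ W), (hTallmem _).2 ⟨hRsub M, hRTM M hM⟩, ?_⟩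
        rw [hworks]
        simp only [hrecover M]
        exact ⟨hM, le_refl _⟩
    -- a minimum-cardinality complete family
    set S : Set ℕ := {k | ∃ F : Finset (Finset (Sym2 V × ℕ)),
      ((∀ M' ∈ F, IsTM (trestrict lab W) Δ M') ∧
        ∀ M : Finset (Sym2 V × ℕ), IsTM lab Δ M → ∃ M' ∈ F, works M M') ∧ F.card = k} with hS
    have hSne : S.Nonempty := ⟨Tall.card, Tall, hTallP, rfl⟩
    obtain ⟨F, hFP, hFcard⟩ := Nat.sInf_mem hSne
    -- minimality gives witnesses
    have hmin : ∀ x ∈ F, ∃ M : Finset (Sym2 V × ℕ), IsTM lab Δ M ∧ works M x ∧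
        ∀ y ∈ F, y ≠ x → ¬ works M y := by
      intro x hx
      by_contra hcon
      push_neg at hcon
      have hP'e : (∀ M' ∈ F.erase x, IsTM (trestrict lab W) Δ M') ∧
          ∀ M : Finset (Sym2 V × ℕ), IsTM lab Δ M → ∃ M' ∈ F.erase x, works M M' := by
        constructor
        · intro M' hM'
          exact hFP.1 M' (Finset.mem_of_mem_erase hM')
        · intro M hM
          obtain ⟨M', hM'F, hw⟩ := hFP.2 M hM
          by_cases hMx : M' = x
          · subst hMx
            obtain ⟨y, hyF, hyne, hyw⟩ := hcon M hM hw
            exact ⟨y, Finset.mem_erase.2 ⟨hyne, hyF⟩, hyw⟩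
          · exact ⟨M', Finset.mem_erase.2 ⟨hMx, hM'F⟩, hw⟩
      have hmem : (F.erase x).card ∈ S := ⟨F.erase x, hP'e, rfl⟩
      have hlt : (F.erase x).card < F.card := Finset.card_erase_lt_of_mem hx
      have := Nat.sInf_le hmem
      omega
    -- apply the Bollobás-type bound
    set Bfun : Finset (Sym2 V × ℕ) → Finset (Option V × Fin K) := fun x =>
      if h : ∃ M : Finset (Sym2 V × ℕ), IsTM lab Δ M ∧ works M x ∧
          ∀ y ∈ F, y ≠ x → ¬ works M y then Bhat h.choose else ∅ with hBfun
    have hFbound : F.card ≤ (2 * ν + (4 * ν * (Δ - 1) + ν)).choose (2 * ν) := by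
      refine bollobas F φhat Bfun (2 * ν) (4 * ν * (Δ - 1) + ν) ?_ ?_ ?_ ?_ ?_
      · have h1 : 4 * ν * 1 ≤ 4 * ν * (Δ - 1) := Nat.mul_le_mul_left _ (by omega)
        omega
      · intro x hx
        exact hφcard x (hFP.1 x hx)
      · intro x hx
        rw [hBfun]
        simp only []
        split
        · next h => exact hBcard _ h.choose_spec.1
        · simp
      · intro x hx z hz1 hz2
        have hex := hmin x hx
        rw [hBfun] at hz2
        simp only [dif_pos hex] at hz2
        have hspec := hex.choose_spec
        have hempty := (hwa _ hspec.1 x (hFP.1 x hx)).1 hspec.2.1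
        have : z ∈ φhat x ∩ Bhat hex.choose := Finset.mem_inter.2 ⟨hz1, hz2⟩
        rw [hempty] at this
        exact absurd this (Finset.notMem_empty z)
      · intro x hx y hy hxy
        have hex := hmin y hy
        have hspec := hex.choose_spec
        have hnw : ¬ works hex.choose x := hspec.2.2 x hx hxy
        have hne : φhat x ∩ Bhat hex.choose ≠ ∅ := by
          intro h
          exact hnw ((hwa _ hspec.1 x (hFP.1 x hx)).2 h)
        rw [hBfun]
        simp only [dif_pos hex]
        exact Finset.nonempty_iff_ne_empty.2 hne
    refine ⟨F, ⟨hFP.1, ?_⟩, ?_⟩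
    · intro M hM
      obtain ⟨M', hM'F, hw⟩ := hFP.2 M hM
      rw [hworks] at hw
      exact ⟨M', hM'F, hw⟩
    · refine hFbound.trans ?_
      have hle1 : 2 * ν + (4 * ν * (Δ - 1) + ν) ≤ 5 * ν * Δ := by
        obtain ⟨d, rfl⟩ : ∃ d, Δ = d + 1 := ⟨Δ - 1, by omega⟩
        simp only [Nat.add_sub_cancel]
        nlinarith
      have h2 : (2 * ν + (4 * ν * (Δ - 1) + ν)).choose (2 * ν) ≤
          (5 * ν * Δ).choose (2 * ν) := Nat.choose_le_choose _ hle1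
      refine h2.trans ?_
      refine choose_mono_right (by omega) ?_
      nlinarith
end
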